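/- arXiv:2404.03935 — 8 statements merged into one kernel-verified Lean document; each statement's English description precedes it below -/
import Mathlib

section
/- Let f: ℤ → ℤ be a bijection satisfying f(i+n) = f(i) + n for all i, f(i) > i for all i, and ∑_{i=1}^n (f(i) - i) = kn. Then the cyclic group generated by f acting on ℤ has exactly k orbits. -/
open Finset


private lemma per_mul (n : ℤ) (f : Equiv.Perm ℤ)
    (hper : ∀ i : ℤ, f (i + n) = f i + n) :
    ∀ (c i : ℤ), f (i + c * n) = f i + c * n := by
  intro c
  induction c using Int.induction_on with
  | zero => simp
  | succ m ih =>
      intro i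
      have h1 := hper (i + m * n)
      have h2 := ih i
      have : i + (m + 1 : ℤ) * n = i + m * n + n := by ring
      rw [this, h1, h2]; ring
  | pred m ih =>
      intro i
      have h1 := hper (i - n)
      have h2 := ih (i - n)
      have e1 : i - n + n = i := by ring
      rw [e1] at h1
      have e2 : i + (-(m : ℤ) - 1) * n = i - n + (-m : ℤ) * n := by ring
      rw [e2, h2, h1]; ring

private lemma sum_q (n k : ℤ) (hn : 0 < n) (f : Equiv.Perm ℤ)
    (hper : ∀ i : ℤ, f (i + n) = f i + n)
    (hpos : ∀ i : ℤ, i < f i)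
    (hsum : ∑ i ∈ Finset.Icc (1 : ℤ) n, (f i - i) = k * n) :
    ∑ r ∈ Finset.Icc (1 : ℤ) n, (f r - 1) / n = k := by
  have hmul := per_mul n f hper
  -- injectivity of r ↦ (f r - 1) % n on Icc 1 n
  have hinj : ∀ r ∈ Icc (1:ℤ) n, ∀ r' ∈ Icc (1:ℤ) n,
      (f r - 1) % n = (f r' - 1) % n → r = r' := by
    intro r hr r' hr' h
    have hdvd : n ∣ (f r - 1) - (f r' - 1) := by
      rw [Int.emod_eq_emod_iff_emod_sub_eq_zero] at h
      exact Int.dvd_of_emod_eq_zero h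
    obtain ⟨c, hc⟩ := hdvd
    have hfr : f r = f r' + c * n := by linarith
    have : f r = f (r' + c * n) := by rw [hmul c r']; exact hfr
    have hre : r = r' + c * n := f.injective this
    simp only [mem_Icc] at hr hr'
    rcases lt_trichotomy c 0 with h0 | h0 | h0
    · nlinarith
    · rw [h0, zero_mul, add_zero] at hre; exact hre
    · nlinarith
  have himage : (Icc (1:ℤ) n).image (fun r => (f r - 1) % n) = Ico (0:ℤ) n := by
    apply Finset.eq_of_subset_of_card_le
    · intro x hx
      simp only [mem_image] at hx
      obtain ⟨r, _, rfl⟩ := hx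
      simp only [mem_Ico]
      exact ⟨Int.emod_nonneg _ hn.ne', Int.emod_lt_of_pos _ hn⟩
    · rw [Finset.card_image_of_injOn hinj]
      simp [Int.card_Icc, Int.card_Ico]
  have hsum_s : ∑ r ∈ Icc (1:ℤ) n, (f r - 1) % n = ∑ x ∈ Ico (0:ℤ) n, x := by
    rw [← himage, Finset.sum_image hinj]
  have hsum_r : ∑ r ∈ Icc (1:ℤ) n, (r - 1) = ∑ x ∈ Ico (0:ℤ) n, x := by
    have : (Ico (0:ℤ) n).image (fun x => x + 1) = Icc (1:ℤ) n := by
      ext y; simp only [mem_image, mem_Ico, mem_Icc]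
      constructor
      · rintro ⟨x, hx, rfl⟩; omega
      · intro hy; exact ⟨y - 1, by omega, by ring⟩
    rw [← this, Finset.sum_image (by intro a _ b _ h; simpa using h)]
    simp
  have hdecomp : ∑ r ∈ Icc (1:ℤ) n, (f r - 1)
      = n * ∑ r ∈ Icc (1:ℤ) n, (f r - 1) / n + ∑ r ∈ Icc (1:ℤ) n, (f r - 1) % n := by
    rw [Finset.mul_sum, ← Finset.sum_add_distrib]
    apply Finset.sum_congr rfl
    intro r _
    exact (Int.mul_ediv_add_emod (f r - 1) n).symm
  have hsplit : ∑ r ∈ Icc (1:ℤ) n, (f r - 1)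
      = ∑ r ∈ Icc (1:ℤ) n, (f r - r) + ∑ r ∈ Icc (1:ℤ) n, (r - 1) := by
    rw [← Finset.sum_add_distrib]; apply Finset.sum_congr rfl; intros; ring
  have : n * ∑ r ∈ Icc (1:ℤ) n, (f r - 1) / n = k * n := by
    rw [hsum, hsum_r] at hsplit
    rw [hsum_s] at hdecomp
    linarith
  have := this.trans (mul_comm k n)
  exact mul_left_cancel₀ hn.ne' this

private lemma card_S (n k : ℤ) (hk : 0 < k) (hkn : k < n) (f : Equiv.Perm ℤ)
    (hper : ∀ i : ℤ, f (i + n) = f i + n)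
    (hpos : ∀ i : ℤ, i < f i)
    (hsum : ∑ i ∈ Finset.Icc (1 : ℤ) n, (f i - i) = k * n) :
    Nat.card {i : ℤ | i ≤ 0 ∧ 0 < f i} = k.toNat := by
  have hn : (0:ℤ) < n := hk.trans hkn
  have hmul := per_mul n f hper
  set F : Finset ℤ :=
    (Icc (1:ℤ) n).biUnion
      (fun r => (Icc (1:ℤ) ((f r - 1) / n)).image (fun t => r - t * n)) with hF
  have hset : {i : ℤ | i ≤ 0 ∧ 0 < f i} = ↑F := by
    ext i
    simp only [Set.mem_setOf_eq, hF, coe_biUnion, Set.mem_iUnion, coe_image, Set.mem_image,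
      mem_coe, mem_Icc]
    constructor
    · rintro ⟨hi0, hfi⟩
      have hde := Int.mul_ediv_add_emod (i-1) n
      have hm0 : 0 ≤ (i-1) % n := Int.emod_nonneg _ hn.ne'
      have hmn : (i-1) % n < n := Int.emod_lt_of_pos _ hn
      have hqneg : (i-1)/n < 0 := Int.ediv_neg_of_neg_of_pos (by omega) hn
      have hnq : n * ((i-1)/n) = ((i-1)/n) * n := mul_comm _ _
      refine ⟨i - n * ((i-1)/n), ⟨by omega, by omega⟩, -((i-1)/n), ⟨by omega, ?_⟩, by ring⟩
      have hfi2 : f i = f (i - n * ((i-1)/n)) + ((i-1)/n) * n := by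
        have h2 := hmul ((i-1)/n) (i - n * ((i-1)/n))
        rw [show i - n * ((i-1)/n) + ((i-1)/n) * n = i by ring] at h2
        rw [h2]
      rw [Int.le_ediv_iff_mul_le hn,
        show -((i-1)/n) * n = -(((i-1)/n) * n) by ring]
      have h3 : 0 < f (i - n * ((i-1)/n)) + ((i-1)/n) * n := hfi2 ▸ hfi
      omega
    · rintro ⟨r, ⟨hr1, hrn⟩, t, ⟨ht1, htq⟩, rfl⟩
      have hfi : f (r - t * n) = f r - t * n := by
        have := hmul (-t) r
        rw [show r + -t * n = r - t * n by ring] at this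
        rw [this]; ring
      rw [Int.le_ediv_iff_mul_le hn] at htq
      constructor
      · nlinarith [mul_le_mul_of_nonneg_right (show (1:ℤ) ≤ t from ht1) hn.le]
      · omega
  have hcard : (F.card : ℤ) = k := by
    rw [hF, Finset.card_biUnion]
    · push_cast
      rw [← sum_q n k hn f hper hpos hsum]
      apply Finset.sum_congr rfl
      intro r hr
      simp only [mem_Icc] at hr
      rw [Finset.card_image_of_injective _ (fun a b hab => by
        have : a * n = b * n := by omega
        exact mul_right_cancel₀ hn.ne' this)]
      rw [Int.card_Icc]
      have h1 : 0 ≤ (f r - 1) / n := Int.ediv_nonneg (by have := hpos r; omega) hn.le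
      omega
    · intro r hr r' hr' hne
      simp only [mem_coe, mem_Icc] at hr hr'
      simp only [Function.onFun, Finset.disjoint_left, mem_image, mem_Icc]
      rintro x ⟨t, _, rfl⟩ ⟨t', _, he⟩
      have : r - r' = (t - t') * n := by linarith [he]
      rcases lt_trichotomy t t' with h | h | h
      · nlinarith [mul_le_mul_of_nonneg_right (show t - t' ≤ -1 by omega) hn.le]
      · apply hne; rw [h, sub_self, zero_mul] at this; omega
      · nlinarith [mul_le_mul_of_nonneg_right (show (1:ℤ) ≤ t - t' by omega) hn.le]
  rw [hset, Nat.card_coe_set_eq, Set.ncard_coe_finset]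
  omega

private lemma orbit_card_eq (f : Equiv.Perm ℤ) (hpos : ∀ i : ℤ, i < f i) :
    Nat.card (MulAction.orbitRel.Quotient (Subgroup.zpowers f) ℤ)
      = Nat.card {i : ℤ | i ≤ 0 ∧ 0 < f i} := by
  -- basic orbit dynamics
  have gsucc : ∀ (x d : ℤ), (f ^ (d+1)) x = f ((f ^ d) x) := fun x d => by
    rw [show d + 1 = 1 + d by ring, zpow_add, zpow_one, Equiv.Perm.mul_apply]
  have gmono : ∀ x : ℤ, StrictMono (fun d : ℤ => (f ^ d) x) := fun x =>
    strictMono_int_of_lt_succ (fun d => by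
      show (f ^ d) x < (f ^ (d+1)) x
      rw [gsucc x d]
      exact hpos _)
  have ggrow : ∀ (x : ℤ) (m : ℕ), x + m ≤ (f ^ (m:ℤ)) x := by
    intro x m
    induction m with
    | zero => simp
    | succ m ih =>
        have h1 : ((m:ℤ) + 1) = ((m+1 : ℕ) : ℤ) := by push_cast; ring
        have := gsucc x m
        rw [h1] at this
        have h2 := hpos ((f ^ (m:ℤ)) x)
        rw [this] at *
        push_cast
        omega
  have gdrop : ∀ (x : ℤ) (m : ℕ), (f ^ (-(m:ℤ))) x ≤ x - m := by
    intro x m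
    induction m with
    | zero => simp
    | succ m ih =>
        have h1 : (-(m:ℤ)) = (-((m:ℕ)+1) + 1 : ℤ) := by push_cast; ring
        have h2 := gsucc x (-((m:ℕ)+1))
        rw [← h1] at h2
        have h3 := hpos ((f ^ (-((m:ℕ)+1) : ℤ)) x)
        rw [← h2] at h3
        push_cast
        omega
  -- for every x there is d with (f^d) x ≤ 0 < (f^(d+1)) x
  have key : ∀ x : ℤ, ∃ d : ℤ, (f ^ d) x ≤ 0 ∧ 0 < f ((f ^ d) x) := by
    intro x
    have hbdd : ∃ b : ℤ, ∀ z, (f ^ z) x ≤ 0 → z ≤ b := by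
      refine ⟨max 0 (-x), fun z hz => ?_⟩
      by_contra hc
      push_neg at hc
      have hz0 : 0 ≤ z := le_of_lt (lt_of_le_of_lt (le_max_left _ _) hc)
      obtain ⟨m, rfl⟩ := Int.eq_ofNat_of_zero_le hz0
      have := ggrow x m
      have : -x < (m:ℤ) := lt_of_le_of_lt (le_max_right _ _) hc
      linarith [ggrow x m]
    have hinh : ∃ z : ℤ, (f ^ z) x ≤ 0 := by
      refine ⟨min 0 (-x), ?_⟩
      obtain ⟨m, hm⟩ := Int.eq_ofNat_of_zero_le (show (0:ℤ) ≤ -(min 0 (-x)) by omega)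
      have h2 : min 0 (-x) = -(m:ℤ) := by omega
      rw [h2]
      have := gdrop x m
      have h3 : x - (m:ℤ) ≤ 0 := by omega
      omega
    obtain ⟨d, hd, hmax⟩ := Int.exists_greatest_of_bdd hbdd hinh
    refine ⟨d, hd, ?_⟩
    by_contra hc
    push_neg at hc
    rw [← gsucc x d] at hc
    have := hmax (d+1) hc
    omega
  -- the bijection
  set S := {i : ℤ | i ≤ 0 ∧ 0 < f i} with hS
  have hmk : ∀ (x y : ℤ) (d : ℤ), (f^d) x = y →
      Quotient.mk'' x = (Quotient.mk'' y : MulAction.orbitRel.Quotient (Subgroup.zpowers f) ℤ) := by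
    intro x y d h
    rw [Quotient.eq'', MulAction.orbitRel_apply]
    refine MulAction.mem_orbit_iff.mpr ⟨⟨f ^ (-d), Subgroup.mem_zpowers_iff.mpr ⟨-d, rfl⟩⟩, ?_⟩
    show (f ^ (-d)) y = x
    rw [← h, ← Equiv.Perm.mul_apply, ← zpow_add]
    simp
  have hbij : Function.Bijective
      (fun s : S => (Quotient.mk'' s.val : MulAction.orbitRel.Quotient (Subgroup.zpowers f) ℤ)) := by
    constructor
    · rintro ⟨s, hs1, hs2⟩ ⟨t, ht1, ht2⟩ h
      simp only [Quotient.eq'', MulAction.orbitRel_apply] at h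
      obtain ⟨g, hg⟩ := MulAction.mem_orbit_iff.mp h
      obtain ⟨d, hd⟩ := Subgroup.mem_zpowers_iff.mp g.2
      have hds : (f ^ d) t = s := by
        rw [show g • t = (g : Equiv.Perm ℤ) t from rfl, ← hd] at hg
        exact hg
      have hd0 : d = 0 := by
        rcases lt_trichotomy d 0 with h0 | h0 | h0
        · exfalso
          -- t = (f^(-d)) s, -d ≥ 1
          have hts : (f ^ (-d)) s = t := by
            rw [← hds, ← Equiv.Perm.mul_apply, ← zpow_add]; simp
          have h1 : (f ^ (1:ℤ)) s ≤ (f ^ (-d)) s := (gmono s).monotone (by omega)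
          rw [hts] at h1
          simp only [zpow_one] at h1
          omega
        · exact h0
        · exfalso
          have h1 : (f ^ (1:ℤ)) t ≤ (f ^ d) t := (gmono t).monotone (by omega)
          rw [hds] at h1
          simp only [zpow_one] at h1
          omega
      rw [hd0] at hds
      simp only [zpow_zero, Equiv.Perm.coe_one, id_eq] at hds
      exact Subtype.ext hds.symm
    · intro q
      obtain ⟨x, hx⟩ := Quotient.exists_rep q
      obtain ⟨d, hd1, hd2⟩ := key x
      refine ⟨⟨(f ^ d) x, hd1, hd2⟩, ?_⟩
      simp only []
      rw [← hx]
      have := hmk x ((f^d) x) d rfl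
      rw [← Quotient.mk''_eq_mk]
      exact this.symm
  exact (Nat.card_congr (Equiv.ofBijective _ hbij)).symm

/-- An affine permutation `f` of period `n` with `f i > i` for all `i`
and `∑_{i=1}^n (f i - i) = k * n` generates a cyclic group whose action on `ℤ`
has exactly `k` orbits. -/
theorem affine_permutation_orbit_count (n k : ℤ) (hk : 0 < k) (hkn : k < n)
    (f : Equiv.Perm ℤ)
    (hper : ∀ i : ℤ, f (i + n) = f i + n)
    (hpos : ∀ i : ℤ, i < f i)
    (hsum : ∑ i ∈ Finset.Icc (1 : ℤ) n, (f i - i) = k * n) :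
    Nat.card (MulAction.orbitRel.Quotient (Subgroup.zpowers f) ℤ) = k := by
  rw [orbit_card_eq f hpos, card_S n k hk hkn f hper hpos hsum]
  omega
end

section
/- Let f: ℤ → ℤ be an affine permutation of period n (i.e., a bijection with f(i+n)=f(i)+n for all i), and let α ⊆ ℤ be an orbit of the cyclic group generated by f. Write α as an increasing sequence (..., α_{i-1} < α_i < α_{i+1}, ...), and let m be the number of residues modulo n occurring in α. Then for every i, n divides α_{i+m} - α_i, and the quotient (α_{i+m} - α_i)/n is independent of i. -/
private lemma int_strictMono_surj {g : ℤ → ℤ} (hg : StrictMono g)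
    (hs : Function.Surjective g) : ∀ i, g i = i + g 0 := by
  have hsucc : ∀ i : ℤ, g (i + 1) = g i + 1 := by
    intro i
    have h1 : g i < g (i + 1) := hg (lt_add_one i)
    by_contra hne
    obtain ⟨l, hl⟩ := hs (g i + 1)
    have hil : i < l := hg.lt_iff_lt.mp (by omega)
    have hli : l < i + 1 := hg.lt_iff_lt.mp (by omega)
    omega
  intro i
  induction i using Int.induction_on with
  | zero => simp
  | succ k ih => rw [hsucc, ih]; ring
  | pred k ih =>
    have h := hsucc (-(k : ℤ) - 1)
    rw [show -(k:ℤ) - 1 + 1 = -(k:ℤ) by ring] at h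
    omega

private lemma int_nat_card_Ico (a b : ℤ) : Nat.card (Set.Ico a b) = (b - a).toNat := by
  rw [Nat.card_eq_card_toFinset]; simp [Int.card_Ico]

/-- Let `f` be an affine permutation of period `n` and `α : ℤ → ℤ` a strictly
increasing enumeration of an orbit of the cyclic group generated by `f`. If `m` is the number
of residues modulo `n` occurring in the orbit, then `n ∣ α (i + m) - α i` for every `i`,
and the quotient is independent of `i`. -/
theorem orbit_period_lemma (n : ℤ) (hn : 0 < n) (f : Equiv.Perm ℤ)
    (hper : ∀ i : ℤ, f (i + n) = f i + n)
    (α : ℤ → ℤ) (hmono : StrictMono α)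
    (horb : Set.range α = {y : ℤ | ∃ d : ℤ, (f ^ d) (α 0) = y})
    (m : ℕ)
    (hm : m = Nat.card ((fun x : ℤ => (x : ZMod n.toNat)) '' Set.range α)) :
    (∀ i : ℤ, n ∣ α (i + m) - α i) ∧
    (∀ i i' : ℤ, α (i + m) - α i = α (i' + m) - α i') := by
  classical
  have hNn : (n.toNat : ℤ) = n := Int.toNat_of_nonneg hn.le
  have hzm : ∀ a b : ℤ, ((a : ZMod n.toNat) = (b : ZMod n.toNat)) ↔ n ∣ b - a := by
    intro a b
    rw [ZMod.intCast_eq_intCast_iff, Int.modEq_iff_dvd, hNn]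
  -- commutation with translation by n
  have hc : f * (Equiv.addRight n) = (Equiv.addRight n) * f := by
    ext x
    simp [Equiv.Perm.mul_apply, hper x]
  have hT : ∀ (d : ℤ) (x : ℤ), (f ^ d) (x + n) = (f ^ d) x + n := by
    intro d x
    have hcd : (f ^ d) * (Equiv.addRight n) = (Equiv.addRight n) * (f ^ d) :=
      Commute.zpow_left hc d
    have h7 : ((f ^ d) * (Equiv.addRight n)) x = ((Equiv.addRight n) * (f ^ d)) x := by
      rw [hcd]
    simpa [Equiv.Perm.mul_apply] using h7
  have hTc : ∀ (d c x : ℤ), (f ^ d) (x + c * n) = (f ^ d) x + c * n := by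
    intro d c
    induction c using Int.induction_on with
    | zero => intro x; simp
    | succ k ih =>
      intro x
      rw [show x + ((k:ℤ) + 1) * n = (x + (k:ℤ) * n) + n by ring, hT, ih]; ring
    | pred k ih =>
      intro x
      have h1 := hT d (x + (-(k:ℤ) - 1) * n)
      rw [show x + (-(k:ℤ) - 1) * n + n = x + (-(k:ℤ)) * n by ring, ih] at h1
      linarith
  have happ : ∀ (d e x : ℤ), (f ^ d) ((f ^ e) x) = (f ^ (d + e)) x := by
    intro d e x
    rw [zpow_add]
    exact (Equiv.Perm.mul_apply _ _ _).symm
  have hS : ∀ x : ℤ, x ∈ Set.range α ↔ ∃ d : ℤ, (f ^ d) (α 0) = x :=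
    fun x => Set.ext_iff.mp horb x
  -- closure of the orbit under translation by c*n, given one witness
  have hL1 : ∀ c : ℤ, (∃ i j : ℤ, α j = α i + c * n) →
      ∀ x : ℤ, x ∈ Set.range α ↔ x + c * n ∈ Set.range α := by
    rintro c ⟨i, j, hij⟩
    obtain ⟨di, hdi⟩ := (hS (α i)).mp ⟨i, rfl⟩
    obtain ⟨dj, hdj⟩ := (hS (α j)).mp ⟨j, rfl⟩
    have key : (f ^ (-di + dj)) (α 0) = α 0 + c * n := by
      have h1 : (f ^ (-di)) ((f ^ di) (α 0)) = α 0 := by rw [happ]; simp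
      rw [hdi] at h1
      have h2 : (f ^ (-di)) ((f ^ dj) (α 0)) = α 0 + c * n := by
        rw [hdj, hij, hTc, h1]
      rw [happ] at h2; exact h2
    intro x
    constructor
    · rintro ⟨a, rfl⟩
      obtain ⟨d, hd⟩ := (hS (α a)).mp ⟨a, rfl⟩
      refine (hS _).mpr ⟨d + (-di + dj), ?_⟩
      rw [← happ, key, hTc, hd]
    · intro hx
      obtain ⟨d, hd⟩ := (hS _).mp hx
      have hneg : (f ^ (-(-di + dj))) (α 0) = α 0 - c * n := by
        have h3 : (f ^ (-(-di + dj))) ((f ^ (-di + dj)) (α 0)) = α 0 := by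
          rw [happ, show -(-di + dj) + (-di + dj) = 0 by ring]; simp
        rw [key] at h3
        have h4 := hTc (-(-di + dj)) c (α 0)
        linarith
      refine (hS x).mpr ⟨d + (-(-di + dj)), ?_⟩
      rw [← happ, hneg, show α 0 - c * n = α 0 + (-c) * n by ring, hTc, hd]
      ring
  -- translation closure gives an index shift
  have hshift : ∀ c : ℤ, 0 < c →
      (∀ x : ℤ, x ∈ Set.range α ↔ x + c * n ∈ Set.range α) →
      ∃ t : ℤ, 0 < t ∧ ∀ i : ℤ, α (i + t) = α i + c * n := by
    intro c hcpos hcl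
    have hgex : ∀ i : ℤ, ∃ b, α b = α i + c * n := by
      intro i; exact (hcl (α i)).mp ⟨i, rfl⟩
    choose g hgspec using hgex
    have hgm : StrictMono g := by
      intro i j hij
      have h := hmono hij
      have : α (g i) < α (g j) := by rw [hgspec, hgspec]; linarith
      exact hmono.lt_iff_lt.mp this
    have hgs : Function.Surjective g := by
      intro j
      obtain ⟨a, ha⟩ := (hcl (α j - c * n)).mpr ⟨j, by ring⟩
      refine ⟨a, hmono.injective ?_⟩
      rw [hgspec, ha]; ring
    have hglin := int_strictMono_surj hgm hgs
    refine ⟨g 0, ?_, ?_⟩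
    · have h : α 0 < α (g 0) := by rw [hgspec]; nlinarith
      exact hmono.lt_iff_lt.mp h
    · intro i
      rw [← hglin i]
      exact hgspec i
  -- one step: a residue coincidence gives a shift
  have step : ∀ i j : ℤ, i < j → ((α i : ZMod n.toNat) = (α j : ZMod n.toNat)) →
      ∃ t c : ℤ, 0 < t ∧ 0 < c ∧ α (i + t) = α j ∧ ∀ l, α (l + t) = α l + c * n := by
    intro i j hij hres
    obtain ⟨c, hcc⟩ := (hzm _ _).mp hres
    have hmlt := hmono hij
    have hnc : 0 < n * c := by linarith
    have hcpos : 0 < c := by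
      by_contra h
      push_neg at h
      nlinarith
    obtain ⟨t, ht, hts⟩ := hshift c hcpos (hL1 c ⟨i, j, by linarith⟩)
    exact ⟨t, c, ht, hcpos, by rw [hts]; linarith, hts⟩
  -- pigeonhole: some residue repeats
  haveI : NeZero n.toNat := ⟨by omega⟩
  have hfin : ∃ u v : ℕ, u < v ∧ ((α u : ZMod n.toNat) = (α v : ZMod n.toNat)) := by
    obtain ⟨u, v, huv, he⟩ :=
      Finite.exists_ne_map_eq_of_infinite (fun u : ℕ => ((α u : ℤ) : ZMod n.toNat))
    rcases lt_or_gt_of_ne huv with h | h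
    · exact ⟨u, v, h, he⟩
    · exact ⟨v, u, h, he.symm⟩
  have hex : ∃ u : ℕ, 0 < u ∧ ((α (u : ℤ) : ZMod n.toNat) = ((α 0 : ℤ) : ZMod n.toNat)) := by
    obtain ⟨u, v, hlt, he⟩ := hfin
    have hltz : (u : ℤ) < (v : ℤ) := by exact_mod_cast hlt
    obtain ⟨t, c, ht, hc, _, hts⟩ := step (u : ℤ) (v : ℤ) hltz he
    refine ⟨t.toNat, by omega, ?_⟩
    have h8 := hts 0
    rw [zero_add] at h8
    rw [Int.toNat_of_nonneg ht.le]
    exact (hzm _ _).mpr ⟨-c, by linear_combination -h8⟩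
  set t₀ := Nat.find hex with ht₀def
  have ht₀pos : 0 < t₀ := (Nat.find_spec hex).1
  have ht₀res : ((α ((t₀ : ℕ) : ℤ) : ZMod n.toNat) = ((α 0 : ℤ) : ZMod n.toNat)) :=
    (Nat.find_spec hex).2
  have ht0z : (0 : ℤ) < (t₀ : ℤ) := by exact_mod_cast ht₀pos
  obtain ⟨t, c, htpos, hcpos, hteq, hts⟩ := step 0 (t₀ : ℤ) ht0z ht₀res.symm
  have htt0 : t = (t₀ : ℤ) := by
    have := hmono.injective hteq; omega
  subst htt0
  -- iterate the shift
  have hiter : ∀ q l : ℤ, α (l + q * (t₀ : ℤ)) = α l + q * (c * n) := by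
    intro q
    induction q using Int.induction_on with
    | zero => intro l; simp
    | succ k ih =>
      intro l
      rw [show l + ((k:ℤ) + 1) * (t₀ : ℤ) = (l + (k:ℤ) * (t₀:ℤ)) + (t₀:ℤ) by ring, hts, ih]
      ring
    | pred k ih =>
      intro l
      have h1 := hts (l + (-(k:ℤ) - 1) * (t₀ : ℤ))
      rw [show l + (-(k:ℤ) - 1) * (t₀:ℤ) + (t₀:ℤ) = l + (-(k:ℤ)) * (t₀:ℤ) by ring, ih] at h1
      linarith
  -- the image of residues is exactly that of the first t₀ values
  have himg : (fun x : ℤ => (x : ZMod n.toNat)) '' Set.range α =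
      (fun i : ℤ => ((α i : ℤ) : ZMod n.toNat)) '' (Set.Ico 0 (t₀ : ℤ)) := by
    ext z
    constructor
    · rintro ⟨x, hx, rfl⟩
      obtain ⟨i, rfl⟩ := hx
      refine ⟨i % (t₀ : ℤ), ⟨Int.emod_nonneg i ht0z.ne', Int.emod_lt_of_pos i ht0z⟩, ?_⟩
      show ((α (i % (t₀:ℤ)) : ℤ) : ZMod n.toNat) = ((α i : ℤ) : ZMod n.toNat)
      have h5 := hiter (i / (t₀:ℤ)) (i % (t₀:ℤ))
      rw [Int.emod_add_ediv_mul] at h5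
      exact (hzm _ _).mpr ⟨(i / (t₀:ℤ)) * c, by linear_combination h5⟩
    · rintro ⟨i, _, rfl⟩
      exact ⟨α i, ⟨i, rfl⟩, rfl⟩
  -- injectivity on the first t₀ values
  have hinj : Set.InjOn (fun i : ℤ => ((α i : ℤ) : ZMod n.toNat)) (Set.Ico 0 (t₀ : ℤ)) := by
    have claim : ∀ i j : ℤ, i ∈ Set.Ico 0 (t₀:ℤ) → j ∈ Set.Ico 0 (t₀:ℤ) → i < j →
        ((α i : ZMod n.toNat) = (α j : ZMod n.toNat)) → False := by
      intro i j hi hj hlt hres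
      simp only [Set.mem_Ico] at hi hj
      obtain ⟨t', c', ht', hc', hteq', hts'⟩ := step i j hlt hres
      have htj : t' = j - i := by
        have := hmono.injective hteq'; omega
      have h6 := hts' 0
      rw [zero_add, htj] at h6
      have hres0 : ((α (j - i) : ZMod n.toNat) = ((α 0 : ℤ) : ZMod n.toNat)) :=
        (hzm _ _).mpr ⟨-c', by linear_combination -h6⟩
      have hPm : 0 < (j - i).toNat ∧
          ((α ((j - i).toNat : ℤ) : ZMod n.toNat) = ((α 0 : ℤ) : ZMod n.toNat)) :=
        ⟨by omega, by rw [Int.toNat_of_nonneg (by omega)]; exact hres0⟩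
      exact Nat.find_min hex (show (j - i).toNat < t₀ by omega) hPm
    intro i hi j hj hij2
    by_contra hne
    rcases lt_or_gt_of_ne hne with h | h
    · exact claim i j hi hj h hij2
    · exact claim j i hj hi h hij2.symm
  have hmt : m = t₀ := by
    rw [hm, himg, Nat.card_coe_set_eq, Set.ncard_image_of_injOn hinj,
      ← Nat.card_coe_set_eq, int_nat_card_Ico]
    omega
  have hfin2 : ∀ i : ℤ, α (i + (m : ℤ)) = α i + c * n := by
    intro i
    rw [hmt]
    exact hts i
  refine ⟨fun i => ⟨c, by rw [hfin2 i]; ring⟩, fun i i' => by rw [hfin2 i, hfin2 i']; ring⟩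
end

section
/- Let A = [v_1, ..., v_{hn}] be a (k+1) × (hn) matrix whose columns are standard basis vectors of ℂ^{k+1}, all of whose rows are nonzero, and which has the property that cyclically shifting the columns by n (sending (v_1,...,v_{hn}) to (v_{n+1},...,v_{hn},v_1,...,v_n)) differs from A by a permutation of the rows. Extend A periodically to a (k+1)×∞ matrix with period hn in the columns. Define f_A: ℤ → ℤ by f_A(i) = min{ j ≥ i : v_j = v_{i-1} }. Then f_A is a bijection, f_A(i+n) = f_A(i) + n for all i, f_A(i) ≥ i for all i, and ∑_{i=1}^n (f_A(i) - i) = kn. -/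
/-- Let `v : ℤ → ℂ^{k+1}` be an `h*n`-periodic sequence of columns, each a
standard basis vector, with all rows nonzero, and such that shifting the columns by `n`
permutes the rows. Then `f_A (i) = min {j ≥ i : v j = v (i-1)}` is a well-defined bijection
with `f_A (i+n) = f_A i + n`, `f_A i ≥ i`, and `∑_{i=1}^n (f_A i - i) = k * n`. -/
theorem fA_is_affine_permutation (k n h : ℕ) (hk : 0 < k) (hkn : k < n) (hh : 1 ≤ h)
    (v : ℤ → Fin (k + 1) → ℂ)
    (hper : ∀ j : ℤ, v (j + h * n) = v j)
    (hstd : ∀ j : ℤ, ∃ ℓ : Fin (k + 1), v j = Pi.single ℓ 1)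
    (hrows : ∀ ℓ : Fin (k + 1), ∃ j : ℤ, v j ℓ ≠ 0)
    (hshift : ∃ σ : Equiv.Perm (Fin (k + 1)), ∀ (j : ℤ) (ℓ : Fin (k + 1)),
      v (j + n) ℓ = v j (σ ℓ)) :
    ∃ f : ℤ → ℤ,
      (∀ i : ℤ, IsLeast {j : ℤ | i ≤ j ∧ v j = v (i - 1)} (f i)) ∧
      Function.Bijective f ∧
      (∀ i : ℤ, f (i + n) = f i + n) ∧
      (∀ i : ℤ, i ≤ f i) ∧
      ∑ i ∈ Finset.Icc (1 : ℤ) n, (f i - i) = k * n := by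
  classical
  obtain ⟨σ, hσ⟩ := hshift
  set N : ℤ := (h : ℤ) * n with hNdef
  have hn2 : (2 : ℤ) ≤ (n : ℤ) := by exact_mod_cast (by omega : 2 ≤ n)
  have hnpos : (0 : ℤ) < (n : ℤ) := by linarith
  have hNge : (n : ℤ) ≤ N := by
    have : (1 : ℤ) ≤ (h : ℤ) := by exact_mod_cast hh
    nlinarith
  have hNpos : (0 : ℤ) < N := by linarith
  -- letter function
  choose lam hlam using hstd
  have hveq : ∀ a b : ℤ, v a = v b ↔ lam a = lam b := by
    intro a b
    rw [hlam a, hlam b]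
    constructor
    · intro hs
      by_contra hne
      have := congrFun hs (lam a)
      simp only [Pi.single_eq_same, Pi.single_apply, if_neg hne] at this
      exact one_ne_zero this
    · intro hs; rw [hs]
  -- periodicity for all integer multiples
  have hperm : ∀ (m : ℤ) (j : ℤ), v (j + m * N) = v j := by
    intro m
    induction m using Int.induction_on with
    | zero => simp
    | succ m ih =>
      intro j
      have : j + ((m : ℤ) + 1) * N = (j + N) + m * N := by ring
      rw [this, ih, hper]
    | pred m ih =>
      intro j
      have h1 : (j + (-(m:ℤ) - 1) * N) + N = j + (-(m:ℤ)) * N := by ring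
      have := hper (j + (-(m:ℤ) - 1) * N)
      rw [h1] at this
      rw [← this, ih]
  -- occurrences of each letter arbitrarily far right and left
  have hlamof : ∀ j : ℤ, ∀ ℓ : Fin (k+1), v j ℓ ≠ 0 → lam j = ℓ := by
    intro j ℓ hne
    by_contra hc
    rw [hlam j, Pi.single_apply, if_neg (fun hc2 => hc hc2.symm)] at hne
    exact hne rfl
  have hocc : ∀ (ℓ : Fin (k+1)) (i : ℤ), ∃ j : ℤ, i ≤ j ∧ lam j = ℓ := by
    intro ℓ i
    obtain ⟨j, hj⟩ := hrows ℓ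
    have hl : lam j = ℓ := hlamof j ℓ hj
    refine ⟨j + (max (i - j) 0) * N, ?_, ?_⟩
    · have h0 : 0 ≤ max (i - j) 0 := le_max_right _ _
      have h1 : i - j ≤ max (i - j) 0 := le_max_left _ _
      nlinarith
    · rw [← hl]; exact (hveq _ _).1 (hperm _ _)
  have hoccl : ∀ (ℓ : Fin (k+1)) (i : ℤ), ∃ j : ℤ, j ≤ i ∧ lam j = ℓ := by
    intro ℓ i
    obtain ⟨j, hj⟩ := hrows ℓ
    have hl : lam j = ℓ := hlamof j ℓ hj
    refine ⟨j + (-(max (j - i) 0)) * N, ?_, ?_⟩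
    · have h0 : 0 ≤ max (j - i) 0 := le_max_right _ _
      have h1 : j - i ≤ max (j - i) 0 := le_max_left _ _
      nlinarith
    · rw [← hl]; exact (hveq _ _).1 (hperm _ _)
  -- define f
  have hfex : ∀ i : ℤ, ∃ m : ℤ, IsLeast {j : ℤ | i ≤ j ∧ v j = v (i - 1)} m := by
    intro i
    obtain ⟨j, hij, hlj⟩ := hocc (lam (i-1)) i
    obtain ⟨lb, hlb1, hlb2⟩ := Int.exists_least_of_bdd (P := fun j => i ≤ j ∧ v j = v (i-1))
      ⟨i, fun z hz => hz.1⟩ ⟨j, hij, (hveq _ _).2 hlj⟩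
    exact ⟨lb, hlb1, fun z hz => hlb2 z hz⟩
  choose f hf using hfex
  have hge : ∀ i : ℤ, i ≤ f i := fun i => (hf i).1.1
  have hmem : ∀ i : ℤ, v (f i) = v (i - 1) := fun i => (hf i).1.2
  have hmin : ∀ i j : ℤ, i ≤ j → v j = v (i - 1) → f i ≤ j := fun i j h1 h2 => (hf i).2 ⟨h1, h2⟩
  -- shift invariance of equality of columns
  have hsh : ∀ a b : ℤ, v (a + n) = v (b + n) ↔ v a = v b := by
    intro a b
    constructor
    · intro hs
      funext ℓ
      have := congrFun hs (σ.symm ℓ)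
      rwa [hσ a (σ.symm ℓ), hσ b (σ.symm ℓ), Equiv.apply_symm_apply] at this
    · intro hs
      funext ℓ
      rw [hσ a ℓ, hσ b ℓ, hs]
  have hfn : ∀ i : ℤ, f (i + n) = f i + n := by
    intro i
    have hL : IsLeast {j : ℤ | i + n ≤ j ∧ v j = v (i + n - 1)} (f i + n) := by
      constructor
      · refine ⟨by linarith [hge i], ?_⟩
        have : i + (n:ℤ) - 1 = (i - 1) + n := by ring
        rw [this, hsh]
        exact hmem i
      · rintro z ⟨hz1, hz2⟩
        have h2 : v (z - n) = v (i - 1) := by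
          rw [← hsh]
          have e1 : z - (n:ℤ) + n = z := by ring
          have e2 : i - 1 + (n:ℤ) = i + n - 1 := by ring
          rw [e1, e2]
          exact hz2
        have := hmin i (z - n) (by linarith) h2
        linarith
    exact ((hf (i + n)).unique hL)
  have hfnm : ∀ i : ℤ, f (i - n) = f i - n := by
    intro i
    have := hfn (i - n)
    have e : i - (n:ℤ) + n = i := by ring
    rw [e] at this
    linarith
  have hfm : ∀ (m : ℤ) (i : ℤ), f (i + m * n) = f i + m * n := by
    intro m
    induction m using Int.induction_on with
    | zero => simp
    | succ m ih =>
      intro i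
      have e : i + ((m:ℤ) + 1) * n = (i + m * n) + n := by ring
      rw [e, hfn, ih]
      ring
    | pred m ih =>
      intro i
      have e : i + (-(m:ℤ) - 1) * n = (i + (-(m:ℤ)) * n) - n := by ring
      rw [e, hfnm, ih]
      ring
  have hub : ∀ i : ℤ, f i ≤ i - 1 + N := by
    intro i
    apply hmin
    · linarith
    · have e : i - 1 + N = (i - 1) + 1 * N := by ring
      rw [e, hperm]
  -- injectivity
  have hinj : Function.Injective f := by
    intro a b hab
    by_contra hne
    rcases lt_or_gt_of_ne hne with hlt | hlt
    · have h1 : a ≤ b - 1 := by linarith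
      have h2 : v (b - 1) = v (a - 1) := by
        rw [← hmem b, ← hab, hmem a]
      have := hmin a (b - 1) h1 h2
      have hb := hge b
      rw [hab] at this
      linarith
    · have h1 : b ≤ a - 1 := by linarith
      have h2 : v (a - 1) = v (b - 1) := by
        rw [← hmem a, hab, hmem b]
      have := hmin b (a - 1) h1 h2
      have ha := hge a
      rw [← hab] at this
      linarith
  -- surjectivity
  have hsurj : Function.Surjective f := by
    intro m
    have hex : ∃ z : ℤ, z ≤ m - 1 ∧ v z = v m := by
      refine ⟨m - N, by linarith, ?_⟩
      have e : m = (m - N) + 1 * N := by ring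
      nth_rewrite 2 [e]
      rw [hperm]
    obtain ⟨j0, hj0, hj0g⟩ := Int.exists_greatest_of_bdd (P := fun z => z ≤ m - 1 ∧ v z = v m)
      ⟨m - 1, fun z hz => hz.1⟩ hex
    refine ⟨j0 + 1, ?_⟩
    have hmm : v m = v (j0 + 1 - 1) := by
      have e : j0 + 1 - 1 = j0 := by ring
      rw [e, hj0.2]
    have h1 : f (j0 + 1) ≤ m := hmin _ m (by linarith [hj0.1]) hmm
    by_contra hne
    have h2 : f (j0 + 1) ≤ m - 1 := by
      rcases lt_or_eq_of_le h1 with hlt | heq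
      · linarith
      · exact absurd heq hne
    have h3 : v (f (j0 + 1)) = v m := by
      rw [hmem (j0 + 1), ← hmm]
    have := hj0g (f (j0 + 1)) ⟨h2, h3⟩
    have := hge (j0 + 1)
    linarith
  -- last occurrence function p
  have hpex : ∀ (ℓ : Fin (k+1)) (j : ℤ), ∃ m : ℤ, (m ≤ j ∧ lam m = ℓ) ∧
      ∀ z : ℤ, z ≤ j → lam z = ℓ → z ≤ m := by
    intro ℓ j
    obtain ⟨a, ha1, ha2⟩ := hoccl ℓ j
    obtain ⟨m, hm1, hm2⟩ := Int.exists_greatest_of_bdd (P := fun z => z ≤ j ∧ lam z = ℓ)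
      ⟨j, fun z hz => hz.1⟩ ⟨a, ha1, ha2⟩
    exact ⟨m, hm1, fun z h1 h2 => hm2 z ⟨h1, h2⟩⟩
  choose p hp1 hp2 using hpex
  have hlamf : ∀ i : ℤ, lam (f i) = lam (i - 1) := fun i => (hveq _ _).1 (hmem i)
  -- key: if i ≤ j < f i then i - 1 is the last occurrence of its letter up to j
  have hkey : ∀ i j : ℤ, i ≤ j → j < f i → i - 1 = p (lam (i - 1)) j := by
    intro i j hij hjf
    have h1 : i - 1 ≤ p (lam (i-1)) j := hp2 _ _ _ (by linarith) rfl
    have h2 : p (lam (i-1)) j ≤ i - 1 := by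
      by_contra hc
      push_neg at hc
      have hge' : i ≤ p (lam (i-1)) j := by linarith
      have hv : v (p (lam (i-1)) j) = v (i - 1) := (hveq _ _).2 (hp1 _ _).2
      have := hmin i _ hge' hv
      have := (hp1 (lam (i-1)) j).1
      linarith
    linarith
  have hnelam : ∀ i j : ℤ, i ≤ j → j < f i → lam (i - 1) ≠ lam j := by
    intro i j hij hjf hc
    have := hmin i j hij ((hveq _ _).2 hc.symm)
    linarith
  have hcard : ∀ j : ℤ, ((Finset.Icc (j - N) j).filter (fun i => j < f i)).card = k := by
    intro j
    have hc2 : (Finset.univ.erase (lam j)).card = k := by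
      rw [Finset.card_erase_of_mem (Finset.mem_univ _), Finset.card_univ, Fintype.card_fin]; omega
    rw [← hc2]
    apply Finset.card_bij (fun i _ => lam (i - 1))
    · intro a ha
      rw [Finset.mem_filter, Finset.mem_Icc] at ha
      exact Finset.mem_erase.2 ⟨hnelam a j ha.1.2 ha.2, Finset.mem_univ _⟩
    · intro a ha b hb hab
      rw [Finset.mem_filter, Finset.mem_Icc] at ha hb
      have e1 := hkey a j ha.1.2 ha.2
      have e2 := hkey b j hb.1.2 hb.2
      rw [hab] at e1
      omega
    · intro ℓ hℓ
      rw [Finset.mem_erase] at hℓ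
      have hple : p ℓ j ≤ j := (hp1 ℓ j).1
      have hplam : lam (p ℓ j) = ℓ := (hp1 ℓ j).2
      have hne : p ℓ j ≠ j := fun hc => hℓ.1 (by rw [← hplam, hc])
      have hile : p ℓ j + 1 ≤ j := by omega
      have hjf : j < f (p ℓ j + 1) := by
        by_contra hc
        push_neg at hc
        have hgei := hge (p ℓ j + 1)
        have hlf : lam (f (p ℓ j + 1)) = ℓ := by
          rw [hlamf]
          have e : p ℓ j + 1 - 1 = p ℓ j := by ring
          rw [e, hplam]
        have := hp2 ℓ j (f (p ℓ j + 1)) hc hlf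
        omega
      refine ⟨p ℓ j + 1, ?_, ?_⟩
      · rw [Finset.mem_filter, Finset.mem_Icc]
        have := hub (p ℓ j + 1)
        exact ⟨⟨by omega, hile⟩, hjf⟩
      · have e : p ℓ j + 1 - 1 = p ℓ j := by ring
        rw [e, hplam]
  -- double counting via sigma finsets
  set A : Finset ((_ : ℤ) × ℤ) := (Finset.Icc (1:ℤ) n).sigma (fun i => Finset.Ico i (f i))
    with hA
  set B : Finset ((_ : ℤ) × ℤ) := (Finset.Icc (1:ℤ) n).sigma
    (fun j => (Finset.Icc (j - N) j).filter (fun i => j < f i)) with hB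
  have hnne : (n:ℤ) ≠ 0 := by omega
  have hred : ∀ x : ℤ, 1 ≤ x - ((x - 1) / n) * n ∧ x - ((x - 1) / n) * n ≤ n := by
    intro x
    have h1 := Int.emod_nonneg (x - 1) hnne
    have h2 := Int.emod_lt_of_pos (x - 1) hnpos
    have h4 : x - ((x - 1) / n) * n = (x - 1) % n + 1 := by
      rw [Int.emod_def]; ring
    constructor <;> linarith
  have hdiv0 : ∀ x : ℤ, 1 ≤ x → x ≤ n → (x - 1) / n = 0 := fun x ha hb =>
    Int.ediv_eq_zero_of_lt (by omega) (by omega)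
  have hdivshift : ∀ x t : ℤ, (x + t * n - 1) / n = (x - 1) / n + t := by
    intro x t
    have e : x + t * n - 1 = (x - 1) + t * n := by ring
    rw [e, Int.add_mul_ediv_right _ _ hnne]
  have hfm' : ∀ (t i : ℤ), f (i - t * n) = f i - t * n := by
    intro t i
    have := hfm (-t) i
    have e : i + (-t) * n = i - t * n := by ring
    rw [e] at this
    rw [this]; ring
  have hcardAB : A.card = B.card := by
    refine Finset.card_bij'
      (fun q _ => ⟨q.2 - ((q.2 - 1) / n) * n, q.1 - ((q.2 - 1) / n) * n⟩)
      (fun q _ => ⟨q.2 - ((q.2 - 1) / n) * n, q.1 - ((q.2 - 1) / n) * n⟩)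
      ?m1 ?m2 ?i1 ?i2
    case m1 =>
      rintro ⟨a, b⟩ hq
      rw [hA, Finset.mem_sigma, Finset.mem_Icc, Finset.mem_Ico] at hq
      obtain ⟨⟨ha1, ha2⟩, hb1, hb2⟩ := hq
      dsimp only at *
      rw [hB, Finset.mem_sigma, Finset.mem_Icc, Finset.mem_filter, Finset.mem_Icc]
      dsimp only
      obtain ⟨hr1, hr2⟩ := hred b
      have hfval : f (a - ((b - 1) / n) * n) = f a - ((b - 1) / n) * n := hfm' _ _
      have hub' := hub a
      rw [hfval]
      refine ⟨⟨hr1, hr2⟩, ⟨by linarith, by linarith⟩, by linarith⟩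
    case m2 =>
      rintro ⟨a, b⟩ hq
      rw [hB, Finset.mem_sigma, Finset.mem_Icc, Finset.mem_filter, Finset.mem_Icc] at hq
      obtain ⟨⟨ha1, ha2⟩, ⟨hb1, hb2⟩, hbf⟩ := hq
      dsimp only at *
      rw [hA, Finset.mem_sigma, Finset.mem_Icc, Finset.mem_Ico]
      dsimp only
      obtain ⟨hr1, hr2⟩ := hred b
      have hfval : f (b - ((b - 1) / n) * n) = f b - ((b - 1) / n) * n := hfm' _ _
      rw [hfval]
      refine ⟨⟨hr1, hr2⟩, by linarith, by linarith⟩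
    case i1 =>
      rintro ⟨a, b⟩ hq
      rw [hA, Finset.mem_sigma, Finset.mem_Icc, Finset.mem_Ico] at hq
      obtain ⟨⟨ha1, ha2⟩, hb1, hb2⟩ := hq
      dsimp only at *
      have ht : ((a - ((b - 1) / n) * n) - 1) / n = -((b - 1) / n) := by
        have e : a - ((b - 1) / n) * n = a + (-((b - 1) / n)) * n := by ring
        rw [e, hdivshift, hdiv0 a ha1 ha2, zero_add]
      rw [ht]
      have e1 : a - (b - 1) / (n:ℤ) * n - -((b - 1) / (n:ℤ)) * n = a := by ring
      have e2 : b - (b - 1) / (n:ℤ) * n - -((b - 1) / (n:ℤ)) * n = b := by ring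
      rw [e1, e2]
    case i2 =>
      rintro ⟨a, b⟩ hq
      rw [hB, Finset.mem_sigma, Finset.mem_Icc, Finset.mem_filter, Finset.mem_Icc] at hq
      obtain ⟨⟨ha1, ha2⟩, _, _⟩ := hq
      dsimp only at *
      have ht : ((a - ((b - 1) / n) * n) - 1) / n = -((b - 1) / n) := by
        have e : a - ((b - 1) / n) * n = a + (-((b - 1) / n)) * n := by ring
        rw [e, hdivshift, hdiv0 a ha1 ha2, zero_add]
      rw [ht]
      have e1 : a - (b - 1) / (n:ℤ) * n - -((b - 1) / (n:ℤ)) * n = a := by ring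
      have e2 : b - (b - 1) / (n:ℤ) * n - -((b - 1) / (n:ℤ)) * n = b := by ring
      rw [e1, e2]
  have hAcard : (A.card : ℤ) = ∑ i ∈ Finset.Icc (1:ℤ) n, (f i - i) := by
    rw [hA, Finset.card_sigma, Nat.cast_sum]
    apply Finset.sum_congr rfl
    intro i _
    rw [Int.card_Ico, Int.toNat_of_nonneg (by linarith [hge i])]
  have hBcard : B.card = n * k := by
    rw [hB, Finset.card_sigma]
    rw [Finset.sum_congr rfl (fun j _ => hcard j), Finset.sum_const, Int.card_Icc]
    have e : ((n:ℤ) + 1 - 1).toNat = n := by omega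
    rw [e, smul_eq_mul]
  have hsum : ∑ i ∈ Finset.Icc (1:ℤ) n, (f i - i) = k * n := by
    rw [← hAcard, hcardAB, hBcard]
    push_cast
    ring
  exact ⟨f, hf, ⟨hinj, hsurj⟩, hfn, hge, hsum⟩
end

section
/- Let r = (r_{ij})_{i,j ∈ ℤ} be a matrix of integers satisfying: (C'_1) r_{ij} = j - i + 1 when j < i; (C'_2) r_{ij} = k when j - i ≥ n - 1; (C_3) r_{ij} - r_{i+1,j} ∈ {0,1} and r_{ij} - r_{i,j-1} ∈ {0,1}; (C_4) if r_{i+1,j-1} = r_{i+1,j} = r_{i,j-1} then r_{i+1,j-1} = r_{ij}; (C_5) r_{i+n,j+n} = r_{ij}. Define f: ℤ → ℤ by f(i) = j if and only if r_{ij} = r_{i+1,j} = r_{i,j-1} > r_{i+1,j-1}. Then f is a well-defined bijection ℤ → ℤ satisfying f(i+n) = f(i)+n, i ≤ f(i) ≤ i+n, and ∑_{i=1}^n (f(i)-i) = kn. -/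
/-- A cyclic rank matrix of type `(k,n)` (conditions C'1, C'2, C3, C4, C5)
determines a bounded affine permutation `f ∈ B(k,n)` via
`f i = j ↔ r i j = r (i+1) j = r i (j-1) > r (i+1) (j-1)`. -/
theorem cyclic_rank_matrix_gives_bounded_affine_permutation
    (k n : ℤ) (hk : 0 < k) (hkn : k < n)
    (r : ℤ → ℤ → ℤ)
    (hC1 : ∀ i j : ℤ, j < i → r i j = j - i + 1)
    (hC2 : ∀ i j : ℤ, n - 1 ≤ j - i → r i j = k)
    (hC3 : ∀ i j : ℤ, (r i j - r (i + 1) j = 0 ∨ r i j - r (i + 1) j = 1) ∧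
      (r i j - r i (j - 1) = 0 ∨ r i j - r i (j - 1) = 1))
    (hC4 : ∀ i j : ℤ, r (i + 1) (j - 1) = r (i + 1) j → r (i + 1) (j - 1) = r i (j - 1) →
      r (i + 1) (j - 1) = r i j)
    (hC5 : ∀ i j : ℤ, r (i + n) (j + n) = r i j) :
    ∃ f : ℤ → ℤ,
      (∀ i j : ℤ, f i = j ↔
        (r i j = r (i + 1) j ∧ r i j = r i (j - 1) ∧ r (i + 1) (j - 1) < r i j)) ∧
      Function.Bijective f ∧
      (∀ i : ℤ, f (i + n) = f i + n) ∧
      (∀ i : ℤ, i ≤ f i ∧ f i ≤ i + n) ∧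
      ∑ i ∈ Finset.Icc (1 : ℤ) n, (f i - i) = k * n := by
  classical
  -- one-step monotonicity of the horizontal difference r i j - r (i+1) j
  have Pstep : ∀ i j : ℤ, r i (j - 1) = r (i + 1) (j - 1) → r i j = r (i + 1) j := by
    intro i j h
    have f1 := (hC3 i j).1
    have f2 := (hC3 i j).2
    have f3 := (hC3 i (j - 1)).1
    have f4 := (hC3 (i + 1) j).2
    by_contra hne
    have hcd : r (i + 1) (j - 1) = r (i + 1) j := by omega
    have := hC4 i j hcd h.symm
    omega
  have PmonoNat : ∀ (i j : ℤ) (m : ℕ), r i j = r (i + 1) j →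
      r i (j + m) = r (i + 1) (j + m) := by
    intro i j m h
    induction m with
    | zero => simpa using h
    | succ p ih =>
      have e : (j + ((p : ℤ) + 1)) - 1 = j + (p : ℤ) := by ring
      have hs := Pstep i (j + ((p : ℤ) + 1))
      rw [e] at hs
      have := hs ih
      push_cast
      exact this
  have Pmono : ∀ i j j' : ℤ, j ≤ j' → r i j = r (i + 1) j → r i j' = r (i + 1) j' := by
    intro i j j' hle h
    obtain ⟨m, hm⟩ := Int.le.dest hle
    subst hm
    exact PmonoNat i j m h
  -- one-step monotonicity of the vertical difference r i j - r i (j-1)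
  have Qstep : ∀ i j : ℤ, r i j ≠ r i (j - 1) → r (i + 1) j ≠ r (i + 1) (j - 1) := by
    intro i j h
    have f1 := (hC3 i j).1
    have f2 := (hC3 i j).2
    have f3 := (hC3 i (j - 1)).1
    have f4 := (hC3 (i + 1) j).2
    intro heq
    have hca : r (i + 1) (j - 1) = r i (j - 1) := by omega
    have := hC4 i j heq.symm hca
    omega
  have QmonoNat : ∀ (i j : ℤ) (m : ℕ), r i j ≠ r i (j - 1) →
      r (i + m) j ≠ r (i + m) (j - 1) := by
    intro i j m h
    induction m with
    | zero => simpa using h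
    | succ p ih =>
      have hs := Qstep (i + (p : ℤ)) j ih
      push_cast
      have e3 : i + (p : ℤ) + 1 = i + ((p : ℤ) + 1) := by ring
      rw [← e3]
      exact hs
  have Qmono : ∀ i i' j : ℤ, i ≤ i' → r i j ≠ r i (j - 1) → r i' j ≠ r i' (j - 1) := by
    intro i i' j hle h
    obtain ⟨m, hm⟩ := Int.le.dest hle
    subst hm
    exact QmonoNat i j m h
  -- existence of the least j with r i j = r (i+1) j
  have exF : ∀ i : ℤ, ∃ j, (r i j = r (i + 1) j) ∧ ∀ j', r i j' = r (i + 1) j' → j ≤ j' := by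
    intro i
    have hbdd : ∀ z : ℤ, r i z = r (i + 1) z → i ≤ z := by
      intro z hz
      by_contra hlt
      push_neg at hlt
      have h1 : r i z = z - i + 1 := hC1 i z hlt
      have h2 : r (i + 1) z = z - (i + 1) + 1 := hC1 (i + 1) z (by omega)
      omega
    have hinh : r i (i + n) = r (i + 1) (i + n) := by
      rw [hC2 i (i + n) (by omega), hC2 (i + 1) (i + n) (by omega)]
    obtain ⟨lb, hlb1, hlb2⟩ := Int.exists_least_of_bdd ⟨i, hbdd⟩ ⟨i + n, hinh⟩
    exact ⟨lb, hlb1, hlb2⟩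
  choose f hf1 hf2 using exF
  -- f is characterized by the corner condition
  have fiff : ∀ i j : ℤ, f i = j ↔
      (r i j = r (i + 1) j ∧ r i j = r i (j - 1) ∧ r (i + 1) (j - 1) < r i j) := by
    intro i j
    constructor
    · rintro rfl
      have hb := hf1 i
      have hnot : r i (f i - 1) ≠ r (i + 1) (f i - 1) := by
        intro h
        have := hf2 i (f i - 1) h
        omega
      have f1 := (hC3 i (f i - 1)).1
      have f2 := (hC3 i (f i)).2
      have f3 := (hC3 (i + 1) (f i)).2
      refine ⟨hb, by omega, by omega⟩
    · rintro ⟨h1, h2, h3⟩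
      have hle : f i ≤ j := hf2 i j h1
      have hnot : r i (j - 1) ≠ r (i + 1) (j - 1) := by
        have f3 := (hC3 i (j - 1)).1
        omega
      by_contra hne
      have : f i ≤ j - 1 := by omega
      exact hnot (Pmono i (f i) (j - 1) this (hf1 i))
  -- existence of the least i with r i j ≠ r i (j-1)
  have exU : ∀ j : ℤ, ∃ i, (r i j ≠ r i (j - 1)) ∧ ∀ i', r i' j ≠ r i' (j - 1) → i ≤ i' := by
    intro j
    have hbdd : ∀ z : ℤ, r z j ≠ r z (j - 1) → j - n + 1 ≤ z := by
      intro z hz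
      by_contra hlt
      push_neg at hlt
      have h1 : r z j = k := hC2 z j (by omega)
      have h2 : r z (j - 1) = k := hC2 z (j - 1) (by omega)
      omega
    have hinh : r (j + 1) j ≠ r (j + 1) (j - 1) := by
      rw [hC1 (j + 1) j (by omega), hC1 (j + 1) (j - 1) (by omega)]
      omega
    obtain ⟨lb, hlb1, hlb2⟩ := Int.exists_least_of_bdd ⟨j - n + 1, hbdd⟩ ⟨j + 1, hinh⟩
    exact ⟨lb, hlb1, hlb2⟩
  choose u hu1 hu2 using exU
  -- f i = j implies i = u j - 1
  have fval : ∀ i j : ℤ, f i = j → i = u j - 1 := by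
    intro i j hij
    obtain ⟨h1, h2, h3⟩ := (fiff i j).1 hij
    have hup : r (i + 1) j ≠ r (i + 1) (j - 1) := by
      have f3 := (hC3 (i + 1) j).2
      omega
    have hle : u j ≤ i + 1 := hu2 j (i + 1) hup
    have hgt : ¬ u j ≤ i := by
      intro hle'
      exact (Qmono (u j) i j hle' (hu1 j)) (by omega)
    omega
  -- surjectivity: f (u j - 1) = j
  have fsurj : ∀ j : ℤ, f (u j - 1) = j := by
    intro j
    set t := u j - 1 with ht
    have hdown : r t j = r t (j - 1) := by
      by_contra h
      have := hu2 j t h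
      omega
    have hup : r (t + 1) j ≠ r (t + 1) (j - 1) := by
      have : t + 1 = u j := by omega
      rw [this]; exact hu1 j
    have f1 := (hC3 t j).1
    have f3 := (hC3 t (j - 1)).1
    have f4 := (hC3 (t + 1) j).2
    exact (fiff t j).2 ⟨by omega, hdown, by omega⟩
  have hbij : Function.Bijective f := by
    constructor
    · intro a b hab
      have h1 := fval a (f a) rfl
      have h2 := fval b (f b) rfl
      rw [hab] at h1
      omega
    · intro j
      exact ⟨u j - 1, fsurj j⟩
  -- bounds
  have hbounds : ∀ i : ℤ, i ≤ f i ∧ f i ≤ i + n := by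
    intro i
    constructor
    · by_contra h
      push_neg at h
      have h1 : r i (f i) = f i - i + 1 := hC1 i (f i) h
      have h2 : r (i + 1) (f i) = f i - (i + 1) + 1 := hC1 (i + 1) (f i) (by omega)
      have := hf1 i
      omega
    · refine hf2 i (i + n) ?_
      rw [hC2 i (i + n) (by omega), hC2 (i + 1) (i + n) (by omega)]
  -- periodicity
  have hper : ∀ i : ℤ, f (i + n) = f i + n := by
    intro i
    have mem : r (i + n) (f i + n) = r (i + n + 1) (f i + n) := by
      have e1 := hC5 i (f i)
      have e2 := hC5 (i + 1) (f i)
      have e3 : i + 1 + n = i + n + 1 := by ring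
      rw [e3] at e2
      rw [e1, e2]
      exact hf1 i
    have h1 : f (i + n) ≤ f i + n := hf2 (i + n) (f i + n) mem
    have h2 : f i + n ≤ f (i + n) := by
      have hm := hf1 (i + n)
      have e1 := hC5 i (f (i + n) - n)
      have e2 := hC5 (i + 1) (f (i + n) - n)
      have e3 : f (i + n) - n + n = f (i + n) := by ring
      have e4 : i + 1 + n = i + n + 1 := by ring
      rw [e3] at e1 e2
      rw [e4] at e2
      have : r i (f (i + n) - n) = r (i + 1) (f (i + n) - n) := by
        rw [← e1, ← e2]; exact hm
      have := hf2 i _ this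
      omega
    omega
  -- counting identity: f i - i equals a sum of horizontal differences over a window
  have hcount : ∀ i : ℤ,
      (∑ j ∈ Finset.Ioc (i - 1) (i + n - 1), (r i j - r (i + 1) j)) = f i - i := by
    intro i
    obtain ⟨hb1, hb2⟩ := hbounds i
    have h1 : i - 1 ≤ f i - 1 := by omega
    have h2 : f i - 1 ≤ i + n - 1 := by omega
    rw [← Finset.Ioc_union_Ioc_eq_Ioc h1 h2, Finset.sum_union
      (by simp only [Finset.disjoint_left, Finset.mem_Ioc]; intro a ha hb; omega)]
    have e1 : (∑ j ∈ Finset.Ioc (i - 1) (f i - 1), (r i j - r (i + 1) j)) = f i - i := by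
      rw [Finset.sum_congr rfl (g := fun _ => (1 : ℤ)) ?_]
      · rw [Finset.sum_const, Int.card_Ioc, nsmul_eq_mul, mul_one]
        omega
      · intro j hj
        simp only [Finset.mem_Ioc] at hj
        have f1 := (hC3 i j).1
        have hne : r i j ≠ r (i + 1) j := by
          intro h
          have := hf2 i j h
          omega
        show r i j - r (i + 1) j = 1
        omega
    have e2 : (∑ j ∈ Finset.Ioc (f i - 1) (i + n - 1), (r i j - r (i + 1) j)) = 0 := by
      apply Finset.sum_eq_zero
      intro j hj
      simp only [Finset.mem_Ioc] at hj
      have := Pmono i (f i) j (by omega) (hf1 i)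
      omega
    rw [e1, e2, add_zero]
  -- the row sums
  set A : ℤ → ℤ := fun i => ∑ j ∈ Finset.Ioc (i - 1) (i + n - 1), r i j with hA
  have hAB : ∀ i : ℤ, (∑ j ∈ Finset.Ioc (i - 1) (i + n - 1), (r i j - r (i + 1) j))
      = A i - A (i + 1) + k := by
    intro i
    rw [Finset.sum_sub_distrib]
    have key : (∑ j ∈ Finset.Ioc (i - 1) (i + n - 1), r (i + 1) j) = A (i + 1) - k := by
      have split1 : (∑ j ∈ Finset.Ioc (i - 1) (i + n), r (i + 1) j)
          = (∑ j ∈ Finset.Ioc (i - 1) (i + n - 1), r (i + 1) j) + r (i + 1) (i + n) := by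
        rw [← Finset.Ioc_union_Ioc_eq_Ioc (a := i - 1) (b := i + n - 1) (c := i + n)
          (by omega) (by omega), Finset.sum_union
          (by simp only [Finset.disjoint_left, Finset.mem_Ioc]; intro a ha hb; omega)]
        congr 1
        have : Finset.Ioc (i + n - 1) (i + n) = {i + n} := by
          ext x
          simp only [Finset.mem_Ioc, Finset.mem_singleton]
          omega
        rw [this, Finset.sum_singleton]
      have split2 : (∑ j ∈ Finset.Ioc (i - 1) (i + n), r (i + 1) j)
          = r (i + 1) i + A (i + 1) := by
        have hA2 : A (i + 1) = ∑ j ∈ Finset.Ioc i (i + n), r (i + 1) j := by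
          have e2 : i + 1 - 1 = i := by ring
          have e3 : i + 1 + n - 1 = i + n := by ring
          simp only [hA]
          rw [e2, e3]
        rw [hA2, ← Finset.Ioc_union_Ioc_eq_Ioc (a := i - 1) (b := i) (c := i + n)
          (by omega) (by omega), Finset.sum_union
          (by simp only [Finset.disjoint_left, Finset.mem_Ioc]; intro a ha hb; omega)]
        have e : Finset.Ioc (i - 1) i = {i} := by
          ext x
          simp only [Finset.mem_Ioc, Finset.mem_singleton]
          omega
        rw [e, Finset.sum_singleton]
      have v1 : r (i + 1) (i + n) = k := hC2 (i + 1) (i + n) (by omega)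
      have v2 : r (i + 1) i = 0 := by
        rw [hC1 (i + 1) i (by omega)]; ring
      omega
    rw [key]
    ring
  -- A is n-periodic at the relevant point
  have hAper : A (n + 1) = A 1 := by
    simp only [hA]
    have e1 : (n + 1 : ℤ) - 1 = 1 - 1 + n := by ring
    have e2 : (n + 1 : ℤ) + n - 1 = 1 + n - 1 + n := by ring
    rw [e1, e2, ← Finset.map_add_right_Ioc, Finset.sum_map]
    apply Finset.sum_congr rfl
    intro j _
    simp only [addRightEmbedding_apply]
    have e3 : n + 1 = 1 + n := by ring
    rw [e3]
    exact hC5 1 j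
  -- telescoping
  have tel : ∀ m : ℕ, (∑ i ∈ Finset.Icc (1 : ℤ) (m : ℤ), (A i - A (i + 1)))
      = A 1 - A ((m : ℤ) + 1) := by
    intro m
    induction m with
    | zero => simp
    | succ p ih =>
      have e : Finset.Icc (1 : ℤ) ((p : ℤ) + 1) = insert ((p : ℤ) + 1) (Finset.Icc 1 (p : ℤ)) := by
        ext x
        simp only [Finset.mem_Icc, Finset.mem_insert]
        omega
      push_cast
      rw [e, Finset.sum_insert (by simp only [Finset.mem_Icc]; omega), ih]
      ring
  -- final sum
  refine ⟨f, fiff, hbij, hper, hbounds, ?_⟩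
  have step : ∀ i ∈ Finset.Icc (1 : ℤ) n, f i - i = A i - A (i + 1) + k := by
    intro i _
    rw [← hcount i, hAB i]
  have hn : ((n : ℤ) + 1 - 1).toNat = n.toNat := by omega
  have hn2 : ((n.toNat : ℤ)) = n := by omega
  have htel := tel n.toNat
  rw [hn2] at htel
  rw [Finset.sum_congr rfl step, Finset.sum_add_distrib, Finset.sum_const, Int.card_Icc,
    htel, hAper, sub_self, zero_add, hn, nsmul_eq_mul, hn2]
  ring
end

section
/- Let M = [v_1, ..., v_N] be an r × N complex matrix of rank r with 0 < r < N, with columns indexed cyclically modulo N. Define f_M: ℤ → ℤ by f_M(i) = min{ j ≥ i : v_i ∈ span(v_{i+1}, ..., v_j) } (with column indices taken modulo N). Then f_M is a bounded affine permutation: f_M is a bijection, f_M(i+N) = f_M(i)+N, i ≤ f_M(i) ≤ i+N, and ∑_{i=1}^N (f_M(i)-i) = rN. -/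
open Submodule Module

lemma aux_finrank_insert {K V : Type*} [Field K] [AddCommGroup V] [Module K V]
    [FiniteDimensional K V] {x : V} {s : Set V} (h : x ∉ Submodule.span K s) :
    finrank K (Submodule.span K (insert x s)) = finrank K (Submodule.span K s) + 1 := by
  have hx : x ≠ 0 := fun h0 => h (h0 ▸ (Submodule.span K s).zero_mem)
  have hd : Disjoint (Submodule.span K s) (K ∙ x) :=
    (Submodule.disjoint_span_singleton' hx).mpr h
  have key := Submodule.finrank_sup_add_finrank_inf_eq (Submodule.span K s) (K ∙ x)
  rw [hd.eq_bot, finrank_bot, add_zero, finrank_span_singleton hx] at key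
  rw [Submodule.span_insert, sup_comm]
  exact key

/-- For an `r × N` complex matrix of rank `r` with `0 < r < N`, columns extended
`N`-periodically, the function `f_M (i) = min { j ≥ i : v i ∈ span (v (i+1), ..., v j) }`
is a bounded affine permutation of average `r` and period `N`. -/
theorem cyclic_rank_function_is_bounded_affine (r N : ℕ) (hr : 0 < r) (hrN : r < N)
    (v : ℤ → Fin r → ℂ)
    (hper : ∀ i : ℤ, v (i + N) = v i)
    (hrank : Submodule.span ℂ (Set.range v) = ⊤) :
    ∃ f : ℤ → ℤ,
      (∀ i : ℤ, IsLeast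
        {j : ℤ | i ≤ j ∧ v i ∈ Submodule.span ℂ (v '' Set.Icc (i + 1) j)} (f i)) ∧
      Function.Bijective f ∧
      (∀ i : ℤ, f (i + N) = f i + N) ∧
      (∀ i : ℤ, i ≤ f i ∧ f i ≤ i + N) ∧
      ∑ i ∈ Finset.Icc (1 : ℤ) N, (f i - i) = r * N := by
  classical
  have hN : 0 < (N : ℤ) := by exact_mod_cast hr.trans hrN
  -- periodicity for all multiples
  have hperN : ∀ (t : ℤ) (x : ℤ), v (x + N * t) = v x := by
    intro t
    induction t using Int.induction_on with
    | zero => simp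
    | succ k ih =>
        intro x
        have h1 : x + (N : ℤ) * ((k : ℤ) + 1) = (x + N * k) + N := by ring
        rw [h1, hper, ih]
    | pred k ih =>
        intro x
        have h1 : x + (N : ℤ) * (-(k : ℤ) - 1) + N = x + N * (-(k : ℤ)) := by ring
        calc v (x + (N : ℤ) * (-(k : ℤ) - 1))
            = v (x + (N : ℤ) * (-(k : ℤ) - 1) + N) := (hper _).symm
          _ = v (x + (N : ℤ) * (-(k : ℤ))) := by rw [h1]
          _ = v x := ih x
  have hsp_shift : ∀ a b : ℤ, Submodule.span ℂ (v '' Set.Icc (a + N) (b + N))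
      = Submodule.span ℂ (v '' Set.Icc a b) := by
    intro a b
    congr 1
    ext y
    simp only [Set.mem_image, Set.mem_Icc]
    constructor
    · rintro ⟨x, hx, rfl⟩
      refine ⟨x - N, by omega, ?_⟩
      rw [← hper (x - N), show x - (N:ℤ) + N = x by ring]
    · rintro ⟨x, hx, rfl⟩
      exact ⟨x + N, by omega, hper x⟩
  have htop : ∀ a : ℤ, Submodule.span ℂ (v '' Set.Icc a (a + N - 1)) = ⊤ := by
    intro a
    rw [← top_le_iff, ← hrank, Submodule.span_le]
    rintro _ ⟨x, rfl⟩
    apply Submodule.subset_span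
    have hm0 : 0 ≤ (x - a) % N := Int.emod_nonneg _ (ne_of_gt hN)
    have hmN : (x - a) % N < N := Int.emod_lt_of_pos _ hN
    refine ⟨a + (x - a) % N, by simp only [Set.mem_Icc]; omega, ?_⟩
    have h1 : (x - a) % N + (N : ℤ) * ((x - a) / N) = x - a := Int.emod_add_mul_ediv _ _
    calc v (a + (x - a) % N)
        = v (a + (x - a) % N + N * ((x - a) / N)) := (hperN _ _).symm
      _ = v x := by
          have harg : a + (x - a) % N + N * ((x - a) / N) = x := by linarith
          rw [harg]
  -- existence of least elements
  have hSleast : ∀ i : ℤ, ∃ lb : ℤ,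
      (i ≤ lb ∧ v i ∈ Submodule.span ℂ (v '' Set.Icc (i + 1) lb)) ∧
      ∀ z : ℤ, (i ≤ z ∧ v i ∈ Submodule.span ℂ (v '' Set.Icc (i + 1) z)) → lb ≤ z := by
    intro i
    apply Int.exists_least_of_bdd
    · exact ⟨i, fun z hz => hz.1⟩
    · refine ⟨i + N, le_add_of_nonneg_right hN.le, ?_⟩
      rw [show i + (N : ℤ) = (i + 1) + N - 1 by ring, htop]
      exact Submodule.mem_top
  choose f hf1 hf2 using hSleast
  have hfi_ge : ∀ i, i ≤ f i := fun i => (hf1 i).1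
  have hfi_mem : ∀ i, v i ∈ Submodule.span ℂ (v '' Set.Icc (i + 1) (f i)) :=
    fun i => (hf1 i).2
  have hfi_le : ∀ i, f i ≤ i + N := by
    intro i
    apply hf2 i (i + N)
    refine ⟨le_add_of_nonneg_right hN.le, ?_⟩
    rw [show i + (N : ℤ) = (i + 1) + N - 1 by ring, htop]
    exact Submodule.mem_top
  have hf_min : ∀ i j : ℤ, i ≤ j → j < f i →
      v i ∉ Submodule.span ℂ (v '' Set.Icc (i + 1) j) := by
    intro i j h1 h2 hmem
    exact absurd (hf2 i j ⟨h1, hmem⟩) (not_le.mpr h2)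
  -- periodicity of f
  have hfper : ∀ i, f (i + N) = f i + N := by
    intro i
    have h1 : f (i + N) ≤ f i + N := by
      apply hf2 (i + N) (f i + N)
      constructor
      · linarith [hfi_ge i]
      · rw [show i + (N : ℤ) + 1 = (i + 1) + N by ring, hsp_shift, hper]
        exact hfi_mem i
    have h2 : f i ≤ f (i + N) - N := by
      apply hf2 i (f (i + N) - N)
      constructor
      · linarith [hfi_ge (i + N)]
      · have h3 := hfi_mem (i + N)
        rw [hper i] at h3
        rw [← hsp_shift (i + 1) (f (i + N) - N),
          show f (i + N) - (N : ℤ) + N = f (i + N) by ring,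
          show i + 1 + (N : ℤ) = i + N + 1 by ring]
        exact h3
    omega
  -- greatest elements g
  have hSgreat : ∀ j : ℤ, ∃ ub : ℤ,
      (ub ≤ j ∧ v j ∈ Submodule.span ℂ (v '' Set.Icc ub (j - 1))) ∧
      ∀ z : ℤ, (z ≤ j ∧ v j ∈ Submodule.span ℂ (v '' Set.Icc z (j - 1))) → z ≤ ub := by
    intro j
    apply Int.exists_greatest_of_bdd
    · exact ⟨j, fun z hz => hz.1⟩
    · refine ⟨j - N, by linarith, ?_⟩
      rw [show j - 1 = (j - N) + N - 1 by ring, htop]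
      exact Submodule.mem_top
  choose g hg1 hg2 using hSgreat
  -- image insert lemmas
  have himg_left : ∀ a b : ℤ, a ≤ b →
      v '' Set.Icc a b = insert (v a) (v '' Set.Icc (a + 1) b) := by
    intro a b h
    have hs : Set.Icc a b = insert a (Set.Icc (a + 1) b) := by
      ext x
      simp only [Set.mem_Icc, Set.mem_insert_iff]
      omega
    rw [hs, Set.image_insert_eq]
  have himg_right : ∀ a b : ℤ, a ≤ b →
      v '' Set.Icc a b = insert (v b) (v '' Set.Icc a (b - 1)) := by
    intro a b h
    have hs : Set.Icc a b = insert b (Set.Icc a (b - 1)) := by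
      ext x
      simp only [Set.mem_Icc, Set.mem_insert_iff]
      omega
    rw [hs, Set.image_insert_eq]
  have hspan_empty : ∀ a b : ℤ, b < a →
      Submodule.span ℂ (v '' Set.Icc a b) = ⊥ := by
    intro a b h
    rw [Set.Icc_eq_empty (by omega), Set.image_empty, Submodule.span_empty]
  -- g ∘ f = id
  have hgf : ∀ i, g (f i) = i := by
    intro i
    rcases eq_or_lt_of_le (hfi_ge i) with h | h
    · have hv0 : v i = 0 := by
        have h3 := hfi_mem i
        rw [← h, hspan_empty _ _ (by omega), Submodule.mem_bot] at h3
        exact h3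
      rw [← h]
      refine le_antisymm (hg1 i).1 (hg2 i i ⟨le_refl i, ?_⟩)
      rw [hspan_empty _ _ (by omega), Submodule.mem_bot]
      exact hv0
    · have hA : v i ∉ Submodule.span ℂ (v '' Set.Icc (i + 1) (f i - 1)) :=
        hf_min i (f i - 1) (by omega) (by omega)
      have hexch : v (f i) ∈ Submodule.span ℂ
          (insert (v i) (v '' Set.Icc (i + 1) (f i - 1))) := by
        apply mem_span_insert_exchange ?_ hA
        have h3 := hfi_mem i
        rwa [himg_right (i + 1) (f i) (by omega)] at h3
      have h1 : i ≤ g (f i) := by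
        apply hg2 (f i) i
        refine ⟨le_of_lt h, ?_⟩
        rwa [himg_left i (f i - 1) (by omega)]
      have h2 : g (f i) ≤ i := by
        by_contra hc
        push_neg at hc
        have hsub : v (f i) ∈ Submodule.span ℂ (v '' Set.Icc (i + 1) (f i - 1)) :=
          Submodule.span_mono (Set.image_mono (Set.Icc_subset_Icc (by omega) le_rfl))
            (hg1 (f i)).2
        have h4 := hfi_mem i
        rw [himg_right (i + 1) (f i) (by omega),
          Submodule.span_insert_eq_span hsub] at h4
        exact hA h4
      omega
  -- f ∘ g = id
  have hfg : ∀ j, f (g j) = j := by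
    intro j
    rcases eq_or_lt_of_le (hg1 j).1 with h | h
    · have hv0 : v j = 0 := by
        have h3 := (hg1 j).2
        rw [h, hspan_empty _ _ (by omega), Submodule.mem_bot] at h3
        exact h3
      rw [h]
      refine le_antisymm (hf2 j j ⟨le_refl j, ?_⟩) (hfi_ge j)
      rw [hspan_empty _ _ (by omega), Submodule.mem_bot]
      exact hv0
    · have hB : v j ∉ Submodule.span ℂ (v '' Set.Icc (g j + 1) (j - 1)) := by
        intro hc
        have := hg2 j (g j + 1) ⟨by omega, hc⟩
        omega
      have hexch : v (g j) ∈ Submodule.span ℂ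
          (insert (v j) (v '' Set.Icc (g j + 1) (j - 1))) := by
        apply mem_span_insert_exchange ?_ hB
        have h3 := (hg1 j).2
        rwa [himg_left (g j) (j - 1) (by omega)] at h3
      have hmemj : v (g j) ∈ Submodule.span ℂ (v '' Set.Icc (g j + 1) j) := by
        rwa [himg_right (g j + 1) j (by omega)]
      have h1 : f (g j) ≤ j := hf2 (g j) j ⟨le_of_lt h, hmemj⟩
      have h2 : j ≤ f (g j) := by
        by_contra hc
        push_neg at hc
        have h4 : v (g j) ∈ Submodule.span ℂ (v '' Set.Icc (g j + 1) (j - 1)) :=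
          Submodule.span_mono (Set.image_mono (Set.Icc_subset_Icc le_rfl (by omega)))
            (hfi_mem (g j))
        have h5 := (hg1 j).2
        rw [himg_left (g j) (j - 1) (by omega),
          Submodule.span_insert_eq_span h4] at h5
        exact hB h5
      omega
  refine ⟨f, fun i => ⟨hf1 i, fun z hz => hf2 i z hz⟩,
    Function.bijective_iff_has_inverse.mpr ⟨g, hgf, hfg⟩, hfper,
    fun i => ⟨hfi_ge i, hfi_le i⟩, ?_⟩
  -- the sum formula
  have hstep : ∀ i j : ℤ, i ≤ j →
      (finrank ℂ (Submodule.span ℂ (v '' Set.Icc i j)) : ℤ)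
        - (finrank ℂ (Submodule.span ℂ (v '' Set.Icc (i + 1) j)) : ℤ)
      = if f i ≤ j then 0 else 1 := by
    intro i j hij
    by_cases hc : f i ≤ j
    · rw [if_pos hc]
      have hmem : v i ∈ Submodule.span ℂ (v '' Set.Icc (i + 1) j) :=
        Submodule.span_mono (Set.image_mono (Set.Icc_subset_Icc le_rfl hc)) (hfi_mem i)
      rw [himg_left i j hij, Submodule.span_insert_eq_span hmem]
      ring
    · rw [if_neg hc]
      push_neg at hc
      have hnm : v i ∉ Submodule.span ℂ (v '' Set.Icc (i + 1) j) := hf_min i j hij hc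
      rw [himg_left i j hij, aux_finrank_insert hnm]
      push_cast
      ring
  have hsum_i : ∀ i : ℤ, f i - i = ∑ k ∈ Finset.range N,
      ((finrank ℂ (Submodule.span ℂ (v '' Set.Icc i (i + (k : ℤ)))) : ℤ)
        - (finrank ℂ (Submodule.span ℂ (v '' Set.Icc (i + 1) (i + (k : ℤ)))) : ℤ)) := by
    intro i
    have h1 : ∀ k ∈ Finset.range N,
        ((finrank ℂ (Submodule.span ℂ (v '' Set.Icc i (i + (k : ℤ)))) : ℤ)
          - (finrank ℂ (Submodule.span ℂ (v '' Set.Icc (i + 1) (i + (k : ℤ)))) : ℤ))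
        = if (k : ℤ) < f i - i then 1 else 0 := by
      intro k _
      rw [hstep i (i + (k : ℤ)) (by omega)]
      split_ifs <;> omega
    rw [Finset.sum_congr rfl h1, Finset.sum_boole]
    have h2 : (Finset.range N).filter (fun k : ℕ => (k : ℤ) < f i - i)
        = Finset.range (f i - i).toNat := by
      ext k
      simp only [Finset.mem_filter, Finset.mem_range]
      have := hfi_le i
      have := hfi_ge i
      omega
    rw [h2, Finset.card_range]
    have := hfi_ge i
    omega
  have hreindex : ∀ c : ℤ,
      (∑ i ∈ Finset.Icc (1 : ℤ) N,
        (finrank ℂ (Submodule.span ℂ (v '' Set.Icc (i + 1) (i + c))) : ℤ))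
      = ∑ i ∈ Finset.Icc (1 : ℤ) N,
        (finrank ℂ (Submodule.span ℂ (v '' Set.Icc i (i + c - 1))) : ℤ) := by
    intro c
    have h1 : (∑ i ∈ Finset.Icc (1 : ℤ) N,
        (finrank ℂ (Submodule.span ℂ (v '' Set.Icc (i + 1) (i + c))) : ℤ))
        = ∑ i ∈ Finset.Icc (2 : ℤ) ((N : ℤ) + 1),
          (finrank ℂ (Submodule.span ℂ (v '' Set.Icc i (i + c - 1))) : ℤ) := by
      rw [show ((2 : ℤ)) = 1 + 1 by ring, show ((N : ℤ) + 1) = (N : ℤ) + 1 from rfl,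
        ← Finset.map_add_right_Icc (1 : ℤ) (N : ℤ) 1, Finset.sum_map]
      apply Finset.sum_congr rfl
      intro i _
      show _ = ((finrank ℂ (Submodule.span ℂ (v '' Set.Icc (i + 1) (i + 1 + c - 1))) : ℤ))
      rw [show i + 1 + c - 1 = i + c by ring]
    rw [h1]
    have e1 : Finset.Icc (2 : ℤ) ((N : ℤ) + 1)
        = insert ((N : ℤ) + 1) (Finset.Icc (2 : ℤ) (N : ℤ)) := by
      ext x
      simp only [Finset.mem_insert, Finset.mem_Icc]
      omega
    have e2 : Finset.Icc (1 : ℤ) (N : ℤ) = insert (1 : ℤ) (Finset.Icc (2 : ℤ) (N : ℤ)) := by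
      ext x
      simp only [Finset.mem_insert, Finset.mem_Icc]
      omega
    rw [e1, Finset.sum_insert (by simp), e2, Finset.sum_insert (by simp)]
    have e3 : (finrank ℂ (Submodule.span ℂ (v '' Set.Icc ((N : ℤ) + 1) ((N : ℤ) + 1 + c - 1))) : ℤ)
        = (finrank ℂ (Submodule.span ℂ (v '' Set.Icc (1 : ℤ) (1 + c - 1))) : ℤ) := by
      have := hsp_shift 1 (1 + c - 1)
      rw [show (1 : ℤ) + (N : ℤ) = (N : ℤ) + 1 by ring,
        show (1 : ℤ) + c - 1 + (N : ℤ) = (N : ℤ) + 1 + c - 1 by ring] at this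
      rw [this]
    rw [e3]
  have htel : ∀ i : ℤ, (∑ k ∈ Finset.range N,
      ((finrank ℂ (Submodule.span ℂ (v '' Set.Icc i (i + (k : ℤ)))) : ℤ)
        - (finrank ℂ (Submodule.span ℂ (v '' Set.Icc i (i + (k : ℤ) - 1))) : ℤ)))
      = (r : ℤ) := by
    intro i
    have h0 := Finset.sum_range_sub
      (fun k : ℕ => (finrank ℂ (Submodule.span ℂ (v '' Set.Icc i (i + (k : ℤ) - 1))) : ℤ)) N
    have h1 : (∑ k ∈ Finset.range N,
        ((finrank ℂ (Submodule.span ℂ (v '' Set.Icc i (i + (k : ℤ)))) : ℤ)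
          - (finrank ℂ (Submodule.span ℂ (v '' Set.Icc i (i + (k : ℤ) - 1))) : ℤ)))
        = ∑ k ∈ Finset.range N,
        (((fun k : ℕ => (finrank ℂ (Submodule.span ℂ (v '' Set.Icc i (i + (k : ℤ) - 1))) : ℤ)) (k + 1))
          - ((fun k : ℕ => (finrank ℂ (Submodule.span ℂ (v '' Set.Icc i (i + (k : ℤ) - 1))) : ℤ)) k)) := by
      apply Finset.sum_congr rfl
      intro k _
      beta_reduce
      rw [show i + ((k + 1 : ℕ) : ℤ) - 1 = i + (k : ℤ) by push_cast; ring]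
    rw [h1, h0]
    rw [show i + ((0 : ℕ) : ℤ) - 1 = i - 1 by push_cast; ring]
    rw [show i + (N : ℤ) - 1 = i + (N : ℤ) - 1 from rfl, htop i]
    rw [hspan_empty i (i - 1) (by omega)]
    rw [finrank_top, Module.finrank_fin_fun, finrank_bot]
    ring
  calc ∑ i ∈ Finset.Icc (1 : ℤ) N, (f i - i)
      = ∑ i ∈ Finset.Icc (1 : ℤ) N, ∑ k ∈ Finset.range N,
        ((finrank ℂ (Submodule.span ℂ (v '' Set.Icc i (i + (k : ℤ)))) : ℤ)
          - (finrank ℂ (Submodule.span ℂ (v '' Set.Icc (i + 1) (i + (k : ℤ)))) : ℤ)) :=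
        Finset.sum_congr rfl (fun i _ => hsum_i i)
    _ = ∑ k ∈ Finset.range N, ∑ i ∈ Finset.Icc (1 : ℤ) N,
        ((finrank ℂ (Submodule.span ℂ (v '' Set.Icc i (i + (k : ℤ)))) : ℤ)
          - (finrank ℂ (Submodule.span ℂ (v '' Set.Icc (i + 1) (i + (k : ℤ)))) : ℤ)) :=
        Finset.sum_comm
    _ = ∑ k ∈ Finset.range N, ∑ i ∈ Finset.Icc (1 : ℤ) N,
        ((finrank ℂ (Submodule.span ℂ (v '' Set.Icc i (i + (k : ℤ)))) : ℤ)
          - (finrank ℂ (Submodule.span ℂ (v '' Set.Icc i (i + (k : ℤ) - 1))) : ℤ)) := by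
        apply Finset.sum_congr rfl
        intro k _
        rw [Finset.sum_sub_distrib, Finset.sum_sub_distrib, hreindex (k : ℤ)]
    _ = ∑ i ∈ Finset.Icc (1 : ℤ) N, ∑ k ∈ Finset.range N,
        ((finrank ℂ (Submodule.span ℂ (v '' Set.Icc i (i + (k : ℤ)))) : ℤ)
          - (finrank ℂ (Submodule.span ℂ (v '' Set.Icc i (i + (k : ℤ) - 1))) : ℤ)) :=
        Finset.sum_comm
    _ = ∑ i ∈ Finset.Icc (1 : ℤ) N, (r : ℤ) :=
        Finset.sum_congr rfl (fun i _ => htel i)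
    _ = (r : ℤ) * N := by
        rw [Finset.sum_const, Int.card_Icc]
        simp only [nsmul_eq_mul]
        rw [show ((N : ℤ) + 1 - 1) = (N : ℤ) from by ring, Int.toNat_natCast]
        ring
end

section
/- Fix 0 < k < n and h ≥ 1. Let A be a (k+1) × ∞ matrix with columns v_j (j ∈ ℤ) that are standard basis vectors of ℂ^{k+1}, is hn-periodic in columns, has all rows nonzero, and is shift-by-n invariant up to row permutation. Let f = f_A where f_A(i) = min{j ≥ i : v_j = v_{i−1}}. Then the characteristic matrix of f ∘ s_+ (where s_+(i) = i+1) equals A up to row permutation; that is, the orbits of the group generated by f ∘ s_+ acting on ℤ are exactly the supports {j : v_j = e_ℓ} of the rows of A. -/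
/-- For a valid column-periodic matrix `A` with columns `v` and
`g = f_A ∘ s_+` (so `g i = min {j ≥ i + 1 : v j = v i}`), the orbits of the cyclic group
generated by `g` acting on `ℤ` are exactly the supports `{j : v j = e ℓ}` of the rows
of `A`; i.e., the characteristic matrix of `f_A ∘ s_+` equals `A` up to row permutation. -/
theorem characteristic_matrix_of_fA (k n h : ℕ) (hk : 0 < k) (hkn : k < n) (hh : 1 ≤ h)
    (v : ℤ → Fin (k + 1) → ℂ)
    (hper : ∀ j : ℤ, v (j + h * n) = v j)
    (hstd : ∀ j : ℤ, ∃ ℓ : Fin (k + 1), v j = Pi.single ℓ 1)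
    (hrows : ∀ ℓ : Fin (k + 1), ∃ j : ℤ, v j ℓ ≠ 0)
    (hshift : ∃ σ : Equiv.Perm (Fin (k + 1)), ∀ (j : ℤ) (ℓ : Fin (k + 1)),
      v (j + n) ℓ = v j (σ ℓ))
    (g : Equiv.Perm ℤ)
    (hg : ∀ i : ℤ, IsLeast {j : ℤ | i + 1 ≤ j ∧ v j = v i} (g i)) :
    ∀ α : Set ℤ,
      (∃ x : ℤ, α = {y : ℤ | ∃ d : ℤ, (g ^ d) x = y}) ↔
      (∃ ℓ : Fin (k + 1), α = {j : ℤ | v j = Pi.single ℓ 1}) := by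
  have hvg : ∀ i : ℤ, v (g i) = v i := fun i => (hg i).1.2
  have hgi : ∀ i : ℤ, i + 1 ≤ g i := fun i => (hg i).1.1
  have hvginv : ∀ i : ℤ, v (g⁻¹ i) = v i := by
    intro i
    have := hvg (g⁻¹ i)
    simpa using this.symm
  -- v is constant on orbits
  have horb : ∀ (d : ℤ) (x : ℤ), v ((g ^ d) x) = v x := by
    intro d
    induction d using Int.induction_on with
    | zero => simp
    | succ m ih =>
      intro x
      have : (g ^ ((m : ℤ) + 1)) x = (g ^ (m : ℤ)) (g x) := by
        rw [zpow_add, zpow_one, Equiv.Perm.mul_apply]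
      rw [this, ih (g x), hvg]
    | pred m ih =>
      intro x
      have : (g ^ (-(m : ℤ) - 1)) x = (g ^ (-(m : ℤ))) (g⁻¹ x) := by
        rw [zpow_sub, zpow_one, Equiv.Perm.mul_apply]
      rw [this, ih (g⁻¹ x), hvginv]
  -- reachability within a level set
  have hreach : ∀ m : ℕ, ∀ x j : ℤ, x ≤ j → j - x ≤ m → v j = v x →
      ∃ d : ℤ, (g ^ d) x = j := by
    intro m
    induction m with
    | zero =>
      intro x j hle hle2 hvj
      have : x = j := by omega
      exact ⟨0, by simp [this]⟩
    | succ m ih =>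
      intro x j hle hle2 hvj
      rcases eq_or_lt_of_le hle with heq | hlt
      · exact ⟨0, by simp [heq]⟩
      · have hmem : j ∈ {j : ℤ | x + 1 ≤ j ∧ v j = v x} := ⟨by omega, hvj⟩
        have hgle : g x ≤ j := (hg x).2 hmem
        have hgx1 : x + 1 ≤ g x := hgi x
        obtain ⟨d, hd⟩ := ih (g x) j hgle (by omega) (hvj.trans (hvg x).symm)
        refine ⟨d + 1, ?_⟩
        rw [zpow_add, zpow_one, Equiv.Perm.mul_apply, hd]
  -- orbit = level set
  have key : ∀ x : ℤ, {y : ℤ | ∃ d : ℤ, (g ^ d) x = y} = {j : ℤ | v j = v x} := by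
    intro x
    ext j
    constructor
    · rintro ⟨d, rfl⟩
      exact horb d x
    · intro hj
      rcases le_total x j with hle | hle
      · exact hreach (j - x).toNat x j hle (by omega) hj
      · obtain ⟨d, hd⟩ := hreach (x - j).toNat j x hle (by omega) hj.symm
        exact ⟨-d, by rw [zpow_neg, ← hd]; exact (g ^ d).symm_apply_apply j⟩
  intro α
  constructor
  · rintro ⟨x, rfl⟩
    obtain ⟨ℓ, hℓ⟩ := hstd x
    exact ⟨ℓ, by rw [key x, hℓ]⟩
  · rintro ⟨ℓ, rfl⟩
    obtain ⟨j, hj⟩ := hrows ℓ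
    obtain ⟨ℓ', hℓ'⟩ := hstd j
    have : ℓ = ℓ' := by
      by_contra hne
      rw [hℓ', Pi.single_apply, if_neg hne] at hj
      exact hj rfl
    refine ⟨j, ?_⟩
    rw [key j, hℓ', this]
end

section
/- Fix 0 < k < n. Let f ∈ S̃_n^{k,++} (bijection with f(i+n)=f(i)+n, f(i)>i, ∑_{i=1}^n(f(i)−i)=kn) and let α ≠ β be two orbits of ⟨f⟩ on ℤ, with characteristic sequences w^α, w^β. Then for i ∈ α, the number of j ∈ β with i < j and f(j) < f(i) equals s_{i+2, f(i)−1}(w^β − w^α) when w^β_i − w^α_i = w^β_{f(i)} − w^α_{f(i)} = −1, where for a sequence u and i ≤ j, s_{ij}(u) = max(u_{i−1} + u_i + ... + u_j − 1, 0). -/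
open scoped Classical

private lemma aux_le_pow (f : Equiv.Perm ℤ) (hpos : ∀ i : ℤ, i < f i) :
    ∀ (m : ℕ) (x : ℤ), x ≤ (f ^ m) x := by
  intro m
  induction m with
  | zero => intro x; simp
  | succ m ih =>
    intro x
    calc x ≤ f x := (hpos x).le
      _ ≤ (f ^ m) (f x) := ih (f x)
      _ = (f ^ (m + 1)) x := by rw [pow_succ, Equiv.Perm.mul_apply]

private lemma aux_le_zpow (f : Equiv.Perm ℤ) (hpos : ∀ i : ℤ, i < f i)
    {d : ℤ} (hd : 0 ≤ d) (x : ℤ) : x ≤ (f ^ d) x := by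
  lift d to ℕ using hd
  rw [zpow_natCast]
  exact aux_le_pow f hpos d x

/-- On an orbit, `f` is the successor map: if `x < y` in the same orbit, `f x ≤ y`. -/
private lemma aux_succ (f : Equiv.Perm ℤ) (hpos : ∀ i : ℤ, i < f i)
    {x y : ℤ} (e : ℤ) (he : (f ^ e) x = y) (hxy : x < y) : f x ≤ y := by
  rcases le_or_gt e 0 with h | h
  · exfalso
    have h1 : (f ^ (-e)) y = x := by
      rw [← he, ← Equiv.Perm.mul_apply, ← zpow_add, neg_add_cancel, zpow_zero,
        Equiv.Perm.one_apply]
    have := aux_le_zpow f hpos (neg_nonneg.mpr h) y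
    rw [h1] at this
    omega
  · have h1 : (f ^ (e - 1)) (f x) = y := by
      rw [← he]
      have : (f ^ (e - 1)) (f x) = (f ^ (e - 1) * f ^ (1 : ℤ)) x := by
        rw [Equiv.Perm.mul_apply, zpow_one]
      rw [this, ← zpow_add]
      norm_num
    have := aux_le_zpow f hpos (by omega : (0:ℤ) ≤ e - 1) (f x)
    rw [h1] at this
    exact this

/-- For `f ∈ S̃_n^{k,++}`, distinct orbits `α ≠ β` of `⟨f⟩` with
characteristic sequences `wα, wβ`, and `i ∈ α` with
`wβ i - wα i = wβ (f i) - wα (f i) = -1`, the number of `j ∈ β` with `i < j` and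
`f j < f i` equals `s_{i+2, f(i)-1} (wβ - wα)`. -/
theorem orbit_inversion_count (n k : ℤ) (hk : 0 < k) (hkn : k < n)
    (f : Equiv.Perm ℤ)
    (hper : ∀ i : ℤ, f (i + n) = f i + n)
    (hpos : ∀ i : ℤ, i < f i)
    (hsum : ∑ i ∈ Finset.Icc (1 : ℤ) n, (f i - i) = k * n)
    (α β : Set ℤ)
    (hα : ∃ x : ℤ, α = {y : ℤ | ∃ d : ℤ, (f ^ d) x = y})
    (hβ : ∃ x : ℤ, β = {y : ℤ | ∃ d : ℤ, (f ^ d) x = y})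
    (hne : α ≠ β)
    (wα wβ : ℤ → ℤ)
    (hwα : ∀ m : ℤ, wα m = if m ∈ α then 1 else 0)
    (hwβ : ∀ m : ℤ, wβ m = if m ∈ β then 1 else 0)
    (i : ℤ) (hi : i ∈ α)
    (hcond : wβ i - wα i = -1 ∧ wβ (f i) - wα (f i) = -1) :
    (Nat.card {j : ℤ | j ∈ β ∧ i < j ∧ f j < f i} : ℤ) =
      max (∑ m ∈ Finset.Icc (i + 1) (f i - 1), (wβ m - wα m) - 1) 0 := by
  obtain ⟨x₀, hα⟩ := hα
  obtain ⟨y₀, hβ⟩ := hβ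
  -- same-orbit successor lemmas
  have hsuccα : ∀ {x y : ℤ}, x ∈ α → y ∈ α → x < y → f x ≤ y := by
    intro x y hx hy hxy
    rw [hα] at hx hy
    obtain ⟨d1, hd1⟩ := hx
    obtain ⟨d2, hd2⟩ := hy
    refine aux_succ f hpos (d2 - d1) ?_ hxy
    rw [← hd1, ← Equiv.Perm.mul_apply, ← zpow_add, sub_add_cancel, hd2]
  have hsuccβ : ∀ {x y : ℤ}, x ∈ β → y ∈ β → x < y → f x ≤ y := by
    intro x y hx hy hxy
    rw [hβ] at hx hy
    obtain ⟨d1, hd1⟩ := hx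
    obtain ⟨d2, hd2⟩ := hy
    refine aux_succ f hpos (d2 - d1) ?_ hxy
    rw [← hd1, ← Equiv.Perm.mul_apply, ← zpow_add, sub_add_cancel, hd2]
  -- β is closed under f
  have hβf : ∀ {x : ℤ}, x ∈ β → f x ∈ β := by
    intro x hx
    rw [hβ] at hx ⊢
    obtain ⟨d, hd⟩ := hx
    exact ⟨1 + d, by rw [zpow_one_add, Equiv.Perm.mul_apply, hd]⟩
  -- α and β are disjoint
  have hdisj : ∀ {x : ℤ}, x ∈ α → x ∉ β := by
    intro x hx hxβ
    apply hne
    rw [hα] at hx; rw [hβ] at hxβ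
    obtain ⟨d1, hd1⟩ := hx
    obtain ⟨d2, hd2⟩ := hxβ
    have hcomp : ∀ (a b z : ℤ), (f ^ a) ((f ^ b) z) = (f ^ (a + b)) z := fun a b z => by
      rw [← Equiv.Perm.mul_apply, ← zpow_add]
    rw [hα, hβ]
    ext z
    constructor
    · rintro ⟨d, rfl⟩
      refine ⟨d - d1 + d2, ?_⟩
      rw [← hcomp (d - d1) d2 y₀, hd2, ← hd1, hcomp, show d - d1 + d1 = d from by ring]
    · rintro ⟨d, rfl⟩
      refine ⟨d - d2 + d1, ?_⟩
      rw [← hcomp (d - d2) d1 x₀, hd1, ← hd2, hcomp, show d - d2 + d2 = d from by ring]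
  -- f i ∈ α
  have hfiα : f i ∈ α := by
    rw [hα] at hi ⊢
    obtain ⟨d, hd⟩ := hi
    exact ⟨1 + d, by rw [zpow_one_add, Equiv.Perm.mul_apply, hd]⟩
  -- no α elements strictly between i and f i
  have hαgap : ∀ {m : ℤ}, m ∈ Finset.Icc (i + 1) (f i - 1) → m ∉ α := by
    intro m hm hmα
    rw [Finset.mem_Icc] at hm
    have := hsuccα hi hmα (by omega)
    omega
  set B : Finset ℤ := (Finset.Icc (i + 1) (f i - 1)).filter (· ∈ β) with hB
  -- the sum equals B.card
  have hsumB : ∑ m ∈ Finset.Icc (i + 1) (f i - 1), (wβ m - wα m) = (B.card : ℤ) := by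
    rw [hB, Finset.card_filter]
    push_cast
    apply Finset.sum_congr rfl
    intro m hm
    rw [hwα m, hwβ m, if_neg (hαgap hm)]
    by_cases h : m ∈ β <;> simp [h]
  set T : Finset ℤ := B.filter (fun j => f j < f i) with hT
  have hset : {j : ℤ | j ∈ β ∧ i < j ∧ f j < f i} = (T : Set ℤ) := by
    ext j
    simp only [Set.mem_setOf_eq, hT, hB, Finset.coe_filter, Finset.mem_Icc,
      Set.mem_setOf_eq, Finset.mem_filter]
    constructor
    · rintro ⟨hjβ, hij, hfj⟩
      have := hpos j
      exact ⟨⟨⟨by omega, by omega⟩, hjβ⟩, hfj⟩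
    · rintro ⟨⟨⟨h1, h2⟩, hjβ⟩, hfj⟩
      exact ⟨hjβ, by omega, hfj⟩
  have hcard : Nat.card {j : ℤ | j ∈ β ∧ i < j ∧ f j < f i} = T.card := by
    rw [hset, Nat.card_coe_set_eq, Set.ncard_coe_finset]
  rw [hcard, hsumB]
  by_cases hBne : B.Nonempty
  · -- T = B.erase (max of B)
    set b := B.max' hBne with hb
    have hbB : b ∈ B := B.max'_mem hBne
    have hbβ : b ∈ β := (Finset.mem_filter.mp hbB).2
    have hbIcc := Finset.mem_Icc.mp (Finset.mem_filter.mp hbB).1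
    have hTb : T = B.erase b := by
      ext j
      simp only [hT, Finset.mem_filter, Finset.mem_erase]
      constructor
      · rintro ⟨hjB, hfj⟩
        refine ⟨?_, hjB⟩
        rintro rfl
        -- f b < f i, so f b ∈ B, contradicting maximality
        have hfbβ : f b ∈ β := hβf hbβ
        have hfbB : f b ∈ B := by
          rw [hB, Finset.mem_filter, Finset.mem_Icc]
          have := hpos b
          exact ⟨⟨by omega, by omega⟩, hfbβ⟩
        have := B.le_max' _ hfbB
        have := hpos b
        omega
      · rintro ⟨hjb, hjB⟩
        refine ⟨hjB, ?_⟩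
        have hjβ : j ∈ β := (Finset.mem_filter.mp hjB).2
        have hjb' : j < b := lt_of_le_of_ne (B.le_max' _ hjB) hjb
        have := hsuccβ hjβ hbβ hjb'
        omega
    rw [hTb, Finset.card_erase_of_mem hbB]
    have hB1 : 1 ≤ B.card := Finset.card_pos.mpr hBne
    have : ((B.card - 1 : ℕ) : ℤ) = (B.card : ℤ) - 1 := by omega
    rw [this]
    omega
  · have hB0 : B = ∅ := Finset.not_nonempty_iff_eq_empty.mp hBne
    have hT0 : T = ∅ := by rw [hT, hB0]; simp
    rw [hT0, hB0]
    simp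
end

section
/- Fix 0 < k < n. Define the map φ from the set of equivalence classes (up to row permutation and up to simultaneous shift of all rows by multiples of n) of (k+1)×∞ column-periodic matrices A (with period some multiple of n) whose columns are standard basis vectors, all rows nonzero and not identically zero on any period, and shift-by-n invariant up to row permutation, to S̃_n^{k,+}, by A ↦ f_A where f_A(i) = min{j ≥ i : v_j = v_{i−1}}. Then φ is a bijection onto S̃_n^{k,+} = {f: ℤ→ℤ bijective : f(i+n)=f(i)+n, f(i) ≥ i, ∑_{i=1}^n(f(i)−i)=kn}. -/
/-- A valid `(k+1) × ∞` column-periodic matrix (given by its columns `v`): columns are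
standard basis vectors of `ℂ^{k+1}`, periodic with period a positive multiple of `n`,
all rows nonzero, and shifting the columns by `n` permutes the rows. -/
def ValidMatrix (k n : ℕ) (v : ℤ → Fin (k + 1) → ℂ) : Prop :=
  (∃ h : ℕ, 0 < h ∧ ∀ j : ℤ, v (j + h * n) = v j) ∧
  (∀ j : ℤ, ∃ ℓ : Fin (k + 1), v j = Pi.single ℓ 1) ∧
  (∀ ℓ : Fin (k + 1), ∃ j : ℤ, v j ℓ ≠ 0) ∧
  (∃ σ : Equiv.Perm (Fin (k + 1)), ∀ (j : ℤ) (ℓ : Fin (k + 1)), v (j + n) ℓ = v j (σ ℓ))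

/-- `f = f_A` for the matrix with columns `v`: `f i = min {j ≥ i : v j = v (i-1)}`. -/
def IsFA (v : ℤ → Fin (k + 1) → ℂ) (f : ℤ → ℤ) : Prop :=
  ∀ i : ℤ, IsLeast {j : ℤ | i ≤ j ∧ v j = v (i - 1)} (f i)

/-- Equivalence of matrices: up to a row permutation and a simultaneous shift of the
columns by a multiple of `n`. -/
def MatrixEquiv (k n : ℕ) (v v' : ℤ → Fin (k + 1) → ℂ) : Prop :=
  ∃ σ : Equiv.Perm (Fin (k + 1)), ∃ d : ℤ, ∀ (j : ℤ) (ℓ : Fin (k + 1)),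
    v' j ℓ = v (j + d * n) (σ ℓ)

/-- Membership in `S̃_n^{k,+}`. -/
def IsSkPlus (k n : ℕ) (f : ℤ → ℤ) : Prop :=
  Function.Bijective f ∧ (∀ i : ℤ, f (i + n) = f i + n) ∧ (∀ i : ℤ, i ≤ f i) ∧
    ∑ i ∈ Finset.Icc (1 : ℤ) n, (f i - i) = (k : ℤ) * n


namespace FAP

lemma sigma_mk_eq {a b c d : ℤ} (h1 : a = c) (h2 : b = d) :
    (⟨a, b⟩ : (_ : ℤ) × ℤ) = ⟨c, d⟩ := by subst h1; subst h2; rfl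

variable {n : ℕ} {g : ℤ → ℤ} {C : ℤ}

/-- The crossing finset at cut `J`. -/
noncomputable def cross (g : ℤ → ℤ) (C J : ℤ) : Finset ℤ :=
  (Finset.Icc (J - C + 1) J).filter (fun j => J < g j)

lemma mem_cross_iff (hC : ∀ j : ℤ, g j ≤ j + C) {J j : ℤ} :
    j ∈ cross g C J ↔ j ≤ J ∧ J < g j := by
  simp only [cross, Finset.mem_filter, Finset.mem_Icc]
  constructor
  · rintro ⟨⟨-, h2⟩, h3⟩; exact ⟨h2, h3⟩
  · rintro ⟨h1, h2⟩
    have := hC j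
    exact ⟨⟨by omega, h1⟩, h2⟩

lemma g_shift (hgn : ∀ j : ℤ, g (j + n) = g j + n) :
    ∀ (m : ℤ) (j : ℤ), g (j + m * n) = g j + m * n := by
  intro m
  induction m using Int.induction_on with
  | zero => simp
  | succ m ih =>
      intro j
      have : j + (m + 1 : ℤ) * n = (j + m * n) + n := by ring
      rw [this, hgn, ih]; ring
  | pred m ih =>
      intro j
      have h1 : j + (-(m:ℤ) - 1) * n + n = j + (-(m:ℤ)) * n := by ring
      have := hgn (j + (-(m:ℤ) - 1) * n)
      rw [h1, ih] at this
      omega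

lemma doublecount (hn : 0 < n)
    (hgn : ∀ j : ℤ, g (j + n) = g j + n)
    (hgt : ∀ j : ℤ, j < g j)
    (hC : ∀ j : ℤ, g j ≤ j + C) :
    ∑ j ∈ Finset.Ico (0:ℤ) n, (g j - j) =
      ∑ J ∈ Finset.Ico (0:ℤ) n, ((cross g C J).card : ℤ) := by
  have hgm := g_shift (n := n) hgn
  have hnz : (n:ℤ) ≠ 0 := by exact_mod_cast hn.ne'
  have hnpos : (0:ℤ) < n := by exact_mod_cast hn
  have step1 : ∑ j ∈ Finset.Ico (0:ℤ) n, (g j - j)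
      = (((Finset.Ico (0:ℤ) n).sigma (fun j => Finset.Ico j (g j))).card : ℤ) := by
    rw [Finset.card_sigma]
    push_cast
    refine Finset.sum_congr rfl (fun j _ => ?_)
    rw [Int.card_Ico, Int.toNat_of_nonneg (by have := hgt j; omega)]
  have step2 : (((Finset.Ico (0:ℤ) n).sigma (fun J => cross g C J)).card : ℤ)
      = ∑ J ∈ Finset.Ico (0:ℤ) n, ((cross g C J).card : ℤ) := by
    rw [Finset.card_sigma]; push_cast; rfl
  rw [step1, ← step2]
  congr 1
  refine Finset.card_bij'
    (fun p _ => (⟨p.2 % n, p.1 - (p.2 - p.2 % n)⟩ : (_ : ℤ) × ℤ))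
    (fun p _ => (⟨p.2 % n, p.1 - (p.2 - p.2 % n)⟩ : (_ : ℤ) × ℤ)) ?_ ?_ ?_ ?_
  · rintro ⟨j, J⟩ hp
    simp only [Finset.mem_sigma, Finset.mem_Ico] at hp ⊢
    obtain ⟨⟨hj0, hjn⟩, hjJ, hJg⟩ := hp
    obtain ⟨q, hq⟩ : ∃ q : ℤ, J % n = J + q * n :=
      ⟨-(J / n), by rw [Int.emod_def]; ring⟩
    refine ⟨⟨Int.emod_nonneg J hnz, Int.emod_lt_of_pos J hnpos⟩, ?_⟩
    have he : j - (J - J % n) = j + q * n := by rw [hq]; ring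
    have hg' : g (j - (J - J % n)) = g j + q * n := by rw [he, hgm]
    rw [mem_cross_iff hC]
    constructor
    · omega
    · omega
  · rintro ⟨J, j⟩ hp
    simp only [Finset.mem_sigma, Finset.mem_Ico] at hp ⊢
    obtain ⟨⟨hJ0, hJn⟩, hj⟩ := hp
    rw [mem_cross_iff hC] at hj
    obtain ⟨hjJ, hJg⟩ := hj
    obtain ⟨q, hq⟩ : ∃ q : ℤ, j % n = j + q * n :=
      ⟨-(j / n), by rw [Int.emod_def]; ring⟩
    refine ⟨⟨Int.emod_nonneg j hnz, Int.emod_lt_of_pos j hnpos⟩, ?_, ?_⟩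
    · omega
    · have hg' : g (j % n) = g j + q * n := by rw [hq, hgm]
      omega
  · rintro ⟨j, J⟩ hp
    simp only [Finset.mem_sigma, Finset.mem_Ico] at hp
    obtain ⟨⟨hj0, hjn⟩, hjJ, hJg⟩ := hp
    obtain ⟨q, hq⟩ : ∃ q : ℤ, J % n = J + q * n :=
      ⟨-(J / n), by rw [Int.emod_def]; ring⟩
    have h1 : (j - (J - J % n)) % n = j % n := by
      rw [hq, show j - (J - (J + q * n)) = j + q * n by ring, Int.add_mul_emod_self_right]
    have h2 : j % n = j := Int.emod_eq_of_lt hj0 hjn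
    dsimp only
    refine sigma_mk_eq (by omega) (by omega)
  · rintro ⟨J, j⟩ hp
    simp only [Finset.mem_sigma, Finset.mem_Ico] at hp
    obtain ⟨⟨hJ0, hJn⟩, hj⟩ := hp
    obtain ⟨q, hq⟩ : ∃ q : ℤ, j % n = j + q * n :=
      ⟨-(j / n), by rw [Int.emod_def]; ring⟩
    have h1 : (J - (j - j % n)) % n = J % n := by
      rw [hq, show J - (j - (j + q * n)) = J + q * n by ring, Int.add_mul_emod_self_right]
    have h2 : J % n = J := Int.emod_eq_of_lt hJ0 hJn
    dsimp only
    refine sigma_mk_eq (by omega) (by omega)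


section Orbit

variable (eg : Equiv.Perm ℤ)

def SameOrb (j j' : ℤ) : Prop := ∃ m : ℤ, (eg ^ m) j = j'

lemma sameOrb_refl (j : ℤ) : SameOrb eg j j := ⟨0, rfl⟩

lemma sameOrb_symm {j j' : ℤ} (h : SameOrb eg j j') : SameOrb eg j' j := by
  obtain ⟨m, hm⟩ := h
  exact ⟨-m, by rw [← hm, zpow_neg]; exact (eg ^ m).symm_apply_apply _⟩

lemma sameOrb_trans {a b c : ℤ} (h1 : SameOrb eg a b) (h2 : SameOrb eg b c) :
    SameOrb eg a c := by
  obtain ⟨m1, hm1⟩ := h1; obtain ⟨m2, hm2⟩ := h2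
  exact ⟨m2 + m1, by rw [zpow_add, Equiv.Perm.mul_apply, hm1, hm2]⟩

lemma le_pow (hlt : ∀ x : ℤ, x < eg x) (t : ℕ) (y : ℤ) : y + t ≤ (eg ^ t) y := by
  induction t generalizing y with
  | zero => simp
  | succ t ih =>
      have h1 : (eg ^ (t+1)) y = (eg ^ t) (eg y) := by
        rw [pow_succ, Equiv.Perm.mul_apply]
      have h2 := ih (eg y)
      have h3 := hlt y
      rw [h1]
      push_cast at h2 ⊢
      omega

lemma zpow_mono (hlt : ∀ x : ℤ, x < eg x) {a b : ℤ} (hab : a < b) (x : ℤ) : (eg ^ a) x < (eg ^ b) x := by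
  have h1 : (eg ^ b) x = (eg ^ (b - a)) ((eg ^ a) x) := by
    rw [← Equiv.Perm.mul_apply, ← zpow_add, show b - a + a = b by ring]
  set y := (eg ^ a) x
  have h2 : (0:ℤ) < b - a := by omega
  have h3 : eg ^ (b - a) = eg ^ ((b-a).toNat) := by
    rw [← zpow_natCast, Int.toNat_of_nonneg h2.le]
  have h4 := le_pow eg hlt (b-a).toNat y
  rw [h1, h3]
  omega

lemma crossing_exists (hlt : ∀ x : ℤ, x < eg x) (J x : ℤ) : ∃ y, SameOrb eg x y ∧ y ≤ J ∧ J < eg y := by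
  have hge : ∀ m : ℤ, 0 ≤ m → x + m ≤ (eg ^ m) x := by
    intro m hm
    have h1 : eg ^ m = eg ^ m.toNat := by rw [← zpow_natCast, Int.toNat_of_nonneg hm]
    have h2 := le_pow eg hlt m.toNat x
    rw [h1]; omega
  obtain ⟨m0, hm0, hmax⟩ := Int.exists_greatest_of_bdd
      (P := fun m => (eg ^ m) x ≤ J)
      ⟨((J - x).toNat : ℤ), fun z hz => by
        by_contra hcon
        push_neg at hcon
        have h0 : (0:ℤ) ≤ z := by omega
        have := hge z h0
        omega⟩
      ⟨-(((x - J).toNat : ℕ) : ℤ), by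
        show (eg ^ (-(((x - J).toNat : ℕ) : ℤ))) x ≤ J
        have h1 : (eg ^ (((x - J).toNat : ℕ) : ℤ)) ((eg ^ (-(((x - J).toNat : ℕ) : ℤ))) x) = x := by
          rw [← Equiv.Perm.mul_apply, ← zpow_add,
            show (((x - J).toNat : ℕ) : ℤ) + -(((x - J).toNat : ℕ) : ℤ) = 0 by ring, zpow_zero]
          rfl
        have h3 := le_pow eg hlt (x - J).toNat ((eg ^ (-(((x - J).toNat : ℕ) : ℤ))) x)
        rw [← zpow_natCast, h1] at h3
        omega⟩
  refine ⟨(eg ^ m0) x, ⟨m0, rfl⟩, hm0, ?_⟩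
  have h1 : eg ((eg ^ m0) x) = (eg ^ (1 + m0)) x := by
    rw [zpow_one_add, Equiv.Perm.mul_apply]
  rw [h1]
  by_contra hc
  push_neg at hc
  have := hmax (1 + m0) hc
  omega

lemma crossing_unique (hlt : ∀ x : ℤ, x < eg x) {J y1 y2 : ℤ} (ho : SameOrb eg y1 y2)
    (h1 : y1 ≤ J) (h1' : J < eg y1) (h2 : y2 ≤ J) (h2' : J < eg y2) : y1 = y2 := by
  obtain ⟨m, hm⟩ := ho
  rcases lt_trichotomy m 0 with hcase | hcase | hcase
  · exfalso
    have ha : eg y2 = (eg ^ (1 + m)) y1 := by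
      rw [← hm, ← Equiv.Perm.mul_apply, ← zpow_one_add]
    have hb : (eg ^ (1+m)) y1 ≤ (eg ^ (0:ℤ)) y1 := by
      rcases eq_or_lt_of_le (by omega : 1 + m ≤ 0) with he | hlt2
      · rw [he]
      · exact (zpow_mono eg hlt hlt2 y1).le
    rw [zpow_zero, Equiv.Perm.one_apply] at hb
    omega
  · rw [← hm, hcase, zpow_zero, Equiv.Perm.one_apply]
  · exfalso
    have hb : (eg ^ (1:ℤ)) y1 ≤ (eg ^ m) y1 := by
      rcases eq_or_lt_of_le (by omega : (1:ℤ) ≤ m) with he | hlt2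
      · rw [he]
      · exact (zpow_mono eg hlt hlt2 y1).le
    rw [zpow_one, hm] at hb
    omega

end Orbit

lemma single_idx {m : ℕ} {a b : Fin (m+1)} (h : (Pi.single a 1 : Fin (m+1) → ℂ) = Pi.single b 1) :
    a = b := by
  by_contra hne
  have h2 := congrFun h a
  rw [Pi.single_eq_same, Pi.single_apply] at h2
  rw [if_neg hne] at h2
  exact one_ne_zero h2

variable {k n : ℕ} {v : ℤ → Fin (k + 1) → ℂ}

lemma exists_isFA (hn : 0 < n) (hv : ValidMatrix k n v) : ∃ f : ℤ → ℤ, IsFA v f := by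
  obtain ⟨⟨h, hh, hper⟩, -, -, -⟩ := hv
  have hhn : (1:ℤ) ≤ (h:ℤ) * n := by
    have h1 : (0:ℤ) < h := by exact_mod_cast hh
    have h2 : (0:ℤ) < n := by exact_mod_cast hn
    nlinarith
  have hex : ∀ i : ℤ, ∃ m, IsLeast {j : ℤ | i ≤ j ∧ v j = v (i - 1)} m := by
    intro i
    obtain ⟨lb, hlb1, hlb2⟩ := Int.exists_least_of_bdd (P := fun j => i ≤ j ∧ v j = v (i-1))
      ⟨i, fun z hz => hz.1⟩ ⟨i - 1 + h * n, by omega, by rw [hper]⟩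
    exact ⟨lb, hlb1, fun z hz => hlb2 z hz⟩
  choose f hf using hex
  exact ⟨f, hf⟩

lemma isSkPlus_of_isFA (hk : 0 < k) (hkn : k < n) (hv : ValidMatrix k n v)
    {f : ℤ → ℤ} (hf : IsFA v f) : IsSkPlus k n f := by
  have hn : 0 < n := hk.trans hkn
  obtain ⟨⟨h, hh, hper⟩, hcols, hrows, σ, hσ⟩ := hv
  have hhn : (1:ℤ) ≤ (h:ℤ) * n := by
    have h1 : (0:ℤ) < h := by exact_mod_cast hh
    have h2 : (0:ℤ) < n := by exact_mod_cast hn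
    nlinarith
  have hge : ∀ i, i ≤ f i := fun i => (hf i).1.1
  have hmem : ∀ i, v (f i) = v (i - 1) := fun i => (hf i).1.2
  have hmin : ∀ i m, i ≤ m → v m = v (i - 1) → f i ≤ m := fun i m h1 h2 => (hf i).2 ⟨h1, h2⟩
  have vshift : ∀ a b : ℤ, v a = v b → v (a + n) = v (b + n) := by
    intro a b hab; funext ℓ; rw [hσ, hσ, hab]
  have vunshift : ∀ a b : ℤ, v (a + n) = v (b + n) → v a = v b := by
    intro a b hab; funext ℓ
    have h1 := congrFun hab (σ.symm ℓ)
    rw [hσ, hσ, Equiv.apply_symm_apply] at h1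
    exact h1
  have hfn : ∀ i, f (i + n) = f i + n := by
    intro i
    have hub : f (i + n) ≤ f i + n := by
      apply hmin
      · have := hge i; omega
      · have h2 : v (f i + n) = v ((i-1) + n) := vshift _ _ (hmem i)
        rw [show i + (n:ℤ) - 1 = (i - 1) + n by ring]
        exact h2
    have hlb : f i ≤ f (i + n) - n := by
      apply hmin
      · have := hge (i + n); omega
      · apply vunshift
        rw [show f (i+n) - n + n = f (i+n) by ring, show i - 1 + (n:ℤ) = i + n - 1 by ring]
        exact hmem (i+n)
    omega
  have hub : ∀ i, f i ≤ i - 1 + h * n := by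
    intro i
    apply hmin
    · omega
    · rw [hper]
  have hinj : Function.Injective f := by
    intro a b hab
    by_contra hne
    rcases lt_or_gt_of_ne hne with hlt | hlt
    · have hvab : v (b - 1) = v (a - 1) := by rw [← hmem a, ← hmem b, hab]
      have h1 := hmin a (b - 1) (by omega) hvab
      have h2 := hge b; omega
    · have hvab : v (a - 1) = v (b - 1) := by rw [← hmem a, ← hmem b, hab]
      have h1 := hmin b (a - 1) (by omega) hvab
      have h2 := hge a; omega
  have hsurj : Function.Surjective f := by
    intro m
    obtain ⟨t0, ⟨ht1, ht2⟩, htmax⟩ :=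
      Int.exists_greatest_of_bdd (P := fun t => t ≤ m - 1 ∧ v t = v m)
        ⟨m - 1, fun z hz => hz.1⟩
        ⟨m - h * n, by omega, by
          have h1 := hper (m - h * n)
          rw [show m - (h:ℤ) * n + (h:ℤ) * n = m by ring] at h1
          exact h1.symm⟩
    refine ⟨t0 + 1, ?_⟩
    have hle : f (t0 + 1) ≤ m :=
      hmin _ _ (by omega) (by rw [show t0 + 1 - 1 = t0 by ring]; exact ht2.symm)
    rcases eq_or_lt_of_le hle with he | hlt
    · exact he
    · exfalso
      have hmemt : v (f (t0+1)) = v m := by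
        rw [hmem (t0+1), show t0+1-1 = t0 by ring, ht2]
      have h1 := htmax (f (t0+1)) ⟨by omega, hmemt⟩
      have h2 := hge (t0+1); omega
  choose col hcol using hcols
  have veqc : ∀ a b : ℤ, v a = v b ↔ col a = col b := by
    intro a b
    constructor
    · intro hab
      exact single_idx (m := k) (by rw [← hcol a, ← hcol b, hab])
    · intro hab; rw [hcol a, hcol b, hab]
  set g : ℤ → ℤ := fun j => f (j + 1) with hg
  have hgt : ∀ j, j < g j := fun j => by have := hge (j+1); simp only [hg]; omega
  have hgn : ∀ j : ℤ, g (j + n) = g j + n := by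
    intro j; simp only [hg]
    rw [show j + (n:ℤ) + 1 = (j + 1) + n by ring, hfn]
  have hC : ∀ j, g j ≤ j + (h:ℤ) * n := fun j => by
    have := hub (j+1); simp only [hg]; omega
  have hdc := doublecount hn hgn hgt hC
  have hdown : ∀ N : ℕ, ∀ x : ℤ, v (x - (N:ℤ) * ((h:ℤ)*n)) = v x := by
    intro N
    induction N with
    | zero => intro x; norm_num
    | succ N ih =>
        intro x
        push_cast
        rw [show x - ((N:ℤ)+1) * ((h:ℤ)*n) = (x - ((h:ℤ)*n)) - (N:ℤ)*((h:ℤ)*n) by ring,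
          ih]
        have h1 := hper (x - (h:ℤ)*n)
        rw [show x - (h:ℤ)*n + (h:ℤ)*n = x by ring] at h1
        exact h1.symm
  have hcard : ∀ J : ℤ, (cross g ((h:ℤ)*n) J).card = k + 1 := by
    intro J
    have hbij : (cross g ((h:ℤ)*n) J).card = (Finset.univ : Finset (Fin (k+1))).card := by
      apply Finset.card_bij (fun j _ => col j)
      · intros; exact Finset.mem_univ _
      · intro a ha b hb hab
        rw [mem_cross_iff hC] at ha hb
        by_contra hne
        rcases lt_or_gt_of_ne hne with hlt | hlt
        · have h1 : f (a + 1) ≤ b :=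
            hmin _ _ (by omega) (by rw [show a+1-1 = a by ring]; exact (veqc b a).mpr hab.symm)
          have h2 := ha.2; have h3 := hb.1
          simp only [hg] at h2; omega
        · have h1 : f (b + 1) ≤ a :=
            hmin _ _ (by omega) (by rw [show b+1-1 = b by ring]; exact (veqc a b).mpr hab)
          have h2 := hb.2; have h3 := ha.1
          simp only [hg] at h2; omega
      · intro ℓ _
        obtain ⟨j0, hj0⟩ := hrows ℓ
        have hcj0 : col j0 = ℓ := by
          by_contra hne
          rw [hcol j0, Pi.single_apply, if_neg (fun hc => hne hc.symm)] at hj0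
          exact hj0 rfl
        obtain ⟨t0, ⟨ht1, ht2⟩, htmax⟩ :=
          Int.exists_greatest_of_bdd (P := fun t => t ≤ J ∧ v t = v j0)
            ⟨J, fun z hz => hz.1⟩
            ⟨j0 - ((j0 - J).toNat : ℤ) * ((h:ℤ)*n), by
              have hN : (j0 - J : ℤ) ≤ ((j0 - J).toNat : ℤ) := Int.self_le_toNat _
              have hNp : ((j0 - J).toNat : ℤ) ≤ ((j0 - J).toNat : ℤ) * ((h:ℤ)*n) :=
                le_mul_of_one_le_right (by positivity) hhn
              omega, hdown _ _⟩
        have hmemc : t0 ∈ cross g ((h:ℤ)*n) J := by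
          rw [mem_cross_iff hC]
          refine ⟨ht1, ?_⟩
          by_contra hcon
          push_neg at hcon
          have h1 : f (t0 + 1) ≤ t0 := by
            apply htmax
            refine ⟨by simp only [hg] at hcon; omega, ?_⟩
            rw [hmem (t0+1), show t0+1-1 = t0 by ring, ht2]
          have h2 := hge (t0+1); omega
        exact ⟨t0, hmemc, by rw [(veqc t0 j0).mp ht2, hcj0]⟩
    rw [hbij, Finset.card_univ, Fintype.card_fin]
  have hRHS : ∑ J ∈ Finset.Ico (0:ℤ) n, ((cross g ((h:ℤ)*n) J).card : ℤ)
      = (n:ℤ) * ((k:ℤ) + 1) := by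
    have h1 : ∀ J ∈ Finset.Ico (0:ℤ) n, ((cross g ((h:ℤ)*n) J).card : ℤ) = ((k:ℤ)+1) :=
      fun J _ => by rw [hcard J]; push_cast; ring
    rw [Finset.sum_congr rfl h1, Finset.sum_const, Int.card_Ico]
    rw [show ((n:ℤ) - 0) = (n:ℤ) by ring, Int.toNat_natCast, nsmul_eq_mul]
  have hLHS : ∑ j ∈ Finset.Ico (0:ℤ) n, (g j - j)
      = (∑ i ∈ Finset.Icc (1:ℤ) n, (f i - i)) + n := by
    have h1 : ∑ j ∈ Finset.Ico (0:ℤ) n, (g j - j)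
        = ∑ i ∈ Finset.Icc (1:ℤ) n, (f i - i + 1) := by
      refine Finset.sum_bij' (fun j _ => j + 1) (fun i _ => i - 1) ?_ ?_ ?_ ?_ ?_
      · intro a ha; simp only [Finset.mem_Ico] at ha; simp only [Finset.mem_Icc]; omega
      · intro a ha; simp only [Finset.mem_Icc] at ha; simp only [Finset.mem_Ico]; omega
      · intro a _; omega
      · intro a _; omega
      · intro a _; simp only [hg]; ring
    rw [h1, Finset.sum_add_distrib, Finset.sum_const, Int.card_Icc]
    rw [show ((n:ℤ) + 1 - 1) = (n:ℤ) by ring, Int.toNat_natCast, nsmul_eq_mul]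
    ring
  refine ⟨⟨hinj, hsurj⟩, hfn, hge, ?_⟩
  have hfin : (∑ i ∈ Finset.Icc (1:ℤ) n, (f i - i)) + n = (n:ℤ) * ((k:ℤ)+1) := by
    rw [← hLHS, hdc, hRHS]
  linarith [hfin]

lemma part2 {k n : ℕ} (hk : 0 < k) (hkn : k < n) (f : ℤ → ℤ) (hf : IsSkPlus k n f) :
    ∃ v : ℤ → Fin (k + 1) → ℂ, ValidMatrix k n v ∧ IsFA v f := by
  obtain ⟨hbij, hfn, hge, hsum⟩ := hf
  have hn : 0 < n := hk.trans hkn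
  have hnz : ((n:ℤ)) ≠ 0 := by exact_mod_cast hn.ne'
  set e : Equiv.Perm ℤ := Equiv.ofBijective f hbij with he
  set eg : Equiv.Perm ℤ := (Equiv.addRight (1:ℤ)).trans e with heg
  have hegf : ∀ x : ℤ, eg x = f (x + 1) := fun x => rfl
  have hlt : ∀ x : ℤ, x < eg x := by
    intro x; rw [hegf]; have := hge (x+1); omega
  have fper := g_shift (n := n) hfn
  have fbound : ∀ i : ℤ, f i - i ≤ (k:ℤ) * n := by
    intro i
    set r : ℤ := 1 + (i - 1) % n with hr
    have hr1 : 1 ≤ r ∧ r ≤ n := by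
      have h1 := Int.emod_nonneg (i-1) hnz
      have h2 := Int.emod_lt_of_pos (i-1) (by exact_mod_cast hn : (0:ℤ) < n)
      omega
    have hbase : f r - r ≤ (k:ℤ) * n := by
      have h1 : f r - r ≤ ∑ i ∈ Finset.Icc (1:ℤ) n, (f i - i) := by
        apply Finset.single_le_sum (f := fun i => f i - i)
        · intro i _; have := hge i; omega
        · simp only [Finset.mem_Icc]; exact hr1
      rw [hsum] at h1; exact h1
    obtain ⟨q, hq⟩ : ∃ q : ℤ, i = r + q * n := by
      refine ⟨(i-1)/n, ?_⟩
      have h1 := Int.mul_ediv_add_emod (i-1) (n:ℤ)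
      have h2 : ((i-1)/(n:ℤ)) * n = (n:ℤ) * ((i-1)/n) := mul_comm _ _
      omega
    have h3 := fper q r
    rw [← hq] at h3
    omega
  set C : ℤ := (k:ℤ) * n + 1 with hC0
  have hegn : ∀ j : ℤ, eg (j + n) = eg j + n := by
    intro j; rw [hegf, hegf, show j + (n:ℤ) + 1 = (j + 1) + n by ring, hfn]
  have hCb : ∀ j : ℤ, eg j ≤ j + C := by
    intro j; rw [hegf]; have := fbound (j+1); omega
  have hdc := doublecount hn hegn hlt hCb
  have hcomm : Commute eg (Equiv.addRight (n:ℤ)) := by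
    show eg * Equiv.addRight (n:ℤ) = Equiv.addRight (n:ℤ) * eg
    ext x
    simp only [Equiv.Perm.mul_apply, Equiv.coe_addRight]
    exact hegn x
  have hzn : ∀ (m x : ℤ), (eg ^ m) (x + n) = (eg ^ m) x + n := by
    intro m x
    have h1 := (hcomm.zpow_left m).eq
    have h2 := Equiv.ext_iff.mp h1 x
    simp only [Equiv.Perm.mul_apply, Equiv.coe_addRight] at h2
    exact h2
  choose cp hcp1 hcp2 hcp3 using fun (J x : ℤ) => crossing_exists eg hlt J x
  have cpFix : ∀ J x : ℤ, x ≤ J → J < eg x → cp J x = x := by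
    intro J x h1 h2
    exact crossing_unique eg hlt (sameOrb_symm eg (hcp1 J x)) (hcp2 J x) (hcp3 J x) h1 h2
  have cpOrb : ∀ J x y : ℤ, SameOrb eg x y → cp J x = cp J y := by
    intro J x y hxy
    apply crossing_unique eg hlt ?_ (hcp2 J x) (hcp3 J x) (hcp2 J y) (hcp3 J y)
    exact sameOrb_trans eg (sameOrb_symm eg (hcp1 J x)) (sameOrb_trans eg hxy (hcp1 J y))
  have hcardconst : ∀ J : ℤ, (cross (⇑eg) C J).card = (cross (⇑eg) C 0).card := by
    intro J
    apply Finset.card_bij' (fun j _ => cp 0 j) (fun j _ => cp J j)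
    · intro a _
      rw [mem_cross_iff hCb]; exact ⟨hcp2 0 a, hcp3 0 a⟩
    · intro a _
      rw [mem_cross_iff hCb]; exact ⟨hcp2 J a, hcp3 J a⟩
    · intro a ha
      rw [mem_cross_iff hCb] at ha
      rw [cpOrb J (cp 0 a) a (sameOrb_symm eg (hcp1 0 a))]
      exact cpFix J a ha.1 ha.2
    · intro a ha
      rw [mem_cross_iff hCb] at ha
      rw [cpOrb 0 (cp J a) a (sameOrb_symm eg (hcp1 J a))]
      exact cpFix 0 a ha.1 ha.2
  have hLHS : ∑ j ∈ Finset.Ico (0:ℤ) n, (eg j - j) = (k:ℤ)*n + n := by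
    have h1 : ∑ j ∈ Finset.Ico (0:ℤ) n, (eg j - j)
        = ∑ i ∈ Finset.Icc (1:ℤ) n, (f i - i + 1) := by
      refine Finset.sum_bij' (fun j _ => j + 1) (fun i _ => i - 1) ?_ ?_ ?_ ?_ ?_
      · intro a ha; simp only [Finset.mem_Ico] at ha; simp only [Finset.mem_Icc]; omega
      · intro a ha; simp only [Finset.mem_Icc] at ha; simp only [Finset.mem_Ico]; omega
      · intro a _; omega
      · intro a _; omega
      · intro a _; rw [hegf]; ring
    rw [h1, Finset.sum_add_distrib, hsum, Finset.sum_const, Int.card_Icc,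
      show ((n:ℤ) + 1 - 1) = (n:ℤ) by ring, Int.toNat_natCast, nsmul_eq_mul, mul_one]
  have hcard0 : ((cross (⇑eg) C 0).card : ℤ) = (k:ℤ) + 1 := by
    have h2 : ∑ J ∈ Finset.Ico (0:ℤ) n, ((cross (⇑eg) C J).card : ℤ)
        = (n:ℤ) * ((cross (⇑eg) C 0).card : ℤ) := by
      rw [Finset.sum_congr rfl (fun J _ => by rw [hcardconst J]), Finset.sum_const,
        Int.card_Ico, show ((n:ℤ) - 0) = (n:ℤ) by ring, Int.toNat_natCast, nsmul_eq_mul]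
    have h3 : (n:ℤ) * ((cross (⇑eg) C 0).card : ℤ) = (n:ℤ) * ((k:ℤ)+1) := by
      rw [← h2, ← hdc, hLHS]; ring
    exact mul_left_cancel₀ hnz h3
  have hcard0' : (cross (⇑eg) C 0).card = k + 1 := by exact_mod_cast hcard0
  set ε := Finset.equivFinOfCardEq hcard0' with hε
  have memcp0 : ∀ j : ℤ, cp 0 j ∈ cross (⇑eg) C 0 := fun j =>
    (mem_cross_iff hCb).mpr ⟨hcp2 0 j, hcp3 0 j⟩
  set c : ℤ → Fin (k+1) := fun j => ε ⟨cp 0 j, memcp0 j⟩ with hc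
  have ckey : ∀ j j' : ℤ, c j = c j' ↔ SameOrb eg j j' := by
    intro j j'
    constructor
    · intro hjj
      simp only [hc] at hjj
      have h1 : cp 0 j = cp 0 j' := congrArg Subtype.val (ε.injective hjj)
      refine sameOrb_trans eg (hcp1 0 j) ?_
      rw [h1]
      exact sameOrb_symm eg (hcp1 0 j')
    · intro hjj
      simp only [hc]
      congr 1
      exact Subtype.ext (cpOrb 0 j j' hjj)
  have orbShift : ∀ x y : ℤ, SameOrb eg x y → SameOrb eg (x + n) (y + n) := by
    rintro x y ⟨m, hm⟩; exact ⟨m, by rw [hzn, hm]⟩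
  have orbUnshift : ∀ x y : ℤ, SameOrb eg (x + n) (y + n) → SameOrb eg x y := by
    rintro x y ⟨m, hm⟩
    refine ⟨m, ?_⟩
    rw [hzn] at hm; omega
  set v : ℤ → Fin (k+1) → ℂ := fun j => Pi.single (c j) 1 with hv
  have veqc : ∀ a b : ℤ, v a = v b ↔ c a = c b := by
    intro a b
    constructor
    · intro hab
      simp only [hv] at hab
      exact single_idx (m := k) hab
    · intro hab; simp only [hv]; rw [hab]
  set σ0 : Fin (k+1) → Fin (k+1) := fun ℓ => c ((ε.symm ℓ).1 - n) with hσ0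
  have hσkey : ∀ j : ℤ, σ0 (c (j + n)) = c j := by
    intro j
    have h1 : ε.symm (c (j+n)) = ⟨cp 0 (j+n), memcp0 _⟩ := by
      simp only [hc]; exact ε.symm_apply_apply _
    simp only [hσ0, h1]
    rw [ckey]
    apply orbUnshift
    rw [show cp 0 (j+n) - n + n = cp 0 (j+n) by ring]
    exact sameOrb_symm eg (hcp1 0 (j+n))
  have hσinj : Function.Injective σ0 := by
    intro ℓ1 ℓ2 hl
    simp only [hσ0] at hl
    rw [ckey] at hl
    have h2 : SameOrb eg (ε.symm ℓ1).1 (ε.symm ℓ2).1 := by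
      have h2' := orbShift _ _ hl
      rw [show (ε.symm ℓ1).1 - (n:ℤ) + n = (ε.symm ℓ1).1 by ring,
        show (ε.symm ℓ2).1 - (n:ℤ) + n = (ε.symm ℓ2).1 by ring] at h2'
      exact h2'
    have h3 : cp 0 (ε.symm ℓ1).1 = cp 0 (ε.symm ℓ2).1 := cpOrb 0 _ _ h2
    have hm1 := (mem_cross_iff hCb).mp (ε.symm ℓ1).2
    have hm2 := (mem_cross_iff hCb).mp (ε.symm ℓ2).2
    rw [cpFix 0 _ hm1.1 hm1.2, cpFix 0 _ hm2.1 hm2.2] at h3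
    exact ε.symm.injective (Subtype.ext h3)
  set σ : Equiv.Perm (Fin (k+1)) := Equiv.ofBijective σ0 (Finite.injective_iff_bijective.mp hσinj) with hσdef
  have hσapp : ∀ ℓ, σ ℓ = σ0 ℓ := fun ℓ => rfl
  have hshiftv : ∀ (j : ℤ) (ℓ : Fin (k+1)), v (j + n) ℓ = v j (σ ℓ) := by
    intro j ℓ
    have hiff : σ0 ℓ = c j ↔ ℓ = c (j + n) :=
      ⟨fun hh => hσinj (hh.trans (hσkey j).symm), fun hh => by rw [hh, hσkey]⟩
    simp only [hv, hσapp, Pi.single_apply]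
    exact if_congr hiff.symm rfl rfl
  have crel : ∀ j : ℤ, c (j + n) = σ.symm (c j) := by
    intro j
    have h1 : σ (c (j+n)) = c j := hσkey j
    rw [← h1, Equiv.symm_apply_apply]
  have cpow : ∀ (m : ℕ) (j : ℤ), c (j + (m:ℤ) * n) = ((σ.symm) ^ m) (c j) := by
    intro m
    induction m with
    | zero => intro j; simp
    | succ m ih =>
        intro j
        have hcast : ((m+1 : ℕ) : ℤ) = (m:ℤ) + 1 := by push_cast; ring
        rw [hcast, show j + ((m:ℤ)+1) * n = (j + (m:ℤ)*n) + (n:ℤ) by ring, crel, ih,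
          pow_succ', Equiv.Perm.mul_apply]
  set hh : ℕ := orderOf σ with hhdef
  have hhpos : 0 < hh := orderOf_pos σ
  have hper : ∀ j : ℤ, v (j + (hh:ℤ) * n) = v j := by
    intro j
    have h1 := cpow hh j
    have h2 : (σ.symm) ^ hh = 1 := by
      have h2' : σ.symm = σ⁻¹ := rfl
      rw [h2', inv_pow, hhdef, pow_orderOf_eq_one, inv_one]
    rw [h2, Equiv.Perm.one_apply] at h1
    simp only [hv]; rw [h1]
  have hfa : IsFA v f := by
    intro i
    have hfi : f i = eg (i - 1) := by rw [hegf, show i - 1 + 1 = i by ring]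
    constructor
    · refine ⟨hge i, ?_⟩
      have horb : SameOrb eg (f i) (i - 1) := sameOrb_symm eg ⟨1, by rw [zpow_one, ← hfi]⟩
      exact (veqc _ _).mpr ((ckey _ _).mpr horb)
    · rintro m ⟨him, hvm⟩
      have h1 : SameOrb eg (i - 1) m := sameOrb_symm eg ((ckey _ _).mp ((veqc _ _).mp hvm))
      obtain ⟨t, ht⟩ := h1
      rcases lt_trichotomy t 1 with hcase | hcase | hcase
      · exfalso
        have h2 : (eg^t) (i-1) ≤ (eg^(0:ℤ)) (i-1) := by
          rcases eq_or_lt_of_le (by omega : t ≤ 0) with he2 | hlt2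
          · rw [he2]
          · exact (zpow_mono eg hlt hlt2 _).le
        rw [zpow_zero, Equiv.Perm.one_apply] at h2
        omega
      · rw [hcase, zpow_one] at ht
        rw [hfi, ht]
      · have h2 : (eg^(1:ℤ)) (i-1) ≤ (eg^t) (i-1) := (zpow_mono eg hlt hcase _).le
        rw [zpow_one, ht] at h2
        rw [hfi]; omega
  refine ⟨v, ⟨⟨hh, hhpos, hper⟩, fun j => ⟨c j, rfl⟩, ?_, ⟨σ, hshiftv⟩⟩, hfa⟩
  intro ℓ
  refine ⟨(ε.symm ℓ).1, ?_⟩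
  have hm := (mem_cross_iff hCb).mp (ε.symm ℓ).2
  have h1 : c (ε.symm ℓ).1 = ℓ := by
    simp only [hc]
    have h2 : (⟨cp 0 (ε.symm ℓ).1, memcp0 _⟩ : {x // x ∈ cross (⇑eg) C 0}) = ε.symm ℓ :=
      Subtype.ext (cpFix 0 _ hm.1 hm.2)
    rw [h2, Equiv.apply_symm_apply]
  show ¬ v (ε.symm ℓ).1 ℓ = 0
  simp only [hv]
  rw [h1, Pi.single_eq_same]
  norm_num

lemma isFA_eq_iff {k : ℕ} {w : ℤ → Fin (k + 1) → ℂ} {f : ℤ → ℤ} (hw : IsFA w f) (j j' : ℤ) :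
    w j = w j' ↔ ((∃ t : ℕ, (fun x => f (x+1))^[t] j = j') ∨
      (∃ t : ℕ, (fun x => f (x+1))^[t] j' = j)) := by
  set g : ℤ → ℤ := fun x => f (x + 1) with hg
  have hge : ∀ i, i ≤ f i := fun i => (hw i).1.1
  have hgw : ∀ x, w (g x) = w x := by
    intro x
    have h1 := (hw (x+1)).1.2
    rw [show x + 1 - 1 = x by ring] at h1
    exact h1
  have hgt : ∀ x, x < g x := fun x => by simp only [hg]; have := hge (x+1); omega
  have hmin : ∀ x m, x + 1 ≤ m → w m = w x → g x ≤ m := by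
    intro x m h1 h2
    refine (hw (x+1)).2 ⟨h1, ?_⟩
    rw [show x + 1 - 1 = x by ring]; exact h2
  have hiter : ∀ (t : ℕ) (x : ℤ), w (g^[t] x) = w x := by
    intro t
    induction t with
    | zero => intro x; rfl
    | succ t ih => intro x; rw [Function.iterate_succ_apply', hgw, ih]
  constructor
  · have main : ∀ (N : ℕ) (a b : ℤ), a ≤ b → b - a ≤ N → w a = w b →
        ∃ t : ℕ, g^[t] a = b := by
      intro N
      induction N with
      | zero =>
          intro a b h1 h2 h3
          have hab : a = b := by omega
          exact ⟨0, by rw [Function.iterate_zero_apply]; exact hab⟩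
      | succ N ih =>
          intro a b h1 h2 h3
          rcases eq_or_lt_of_le h1 with he | hlt
          · exact ⟨0, by rw [Function.iterate_zero_apply]; exact he⟩
          · have h4 : g a ≤ b := hmin a b (by omega) h3.symm
            have h5 : w (g a) = w b := by rw [hgw, h3]
            obtain ⟨t, ht⟩ := ih (g a) b h4 (by have := hgt a; omega) h5
            exact ⟨t + 1, by rw [Function.iterate_succ_apply]; exact ht⟩
    intro hww
    rcases le_total j j' with h | h
    · exact Or.inl (main (j' - j).toNat j j' h (by omega) hww)
    · exact Or.inr (main (j - j').toNat j' j h (by omega) hww.symm)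
  · rintro (⟨t, ht⟩ | ⟨t, ht⟩)
    · rw [← ht, hiter]
    · rw [← ht, hiter]

lemma part3 {k n : ℕ} (v v' : ℤ → Fin (k + 1) → ℂ) (f : ℤ → ℤ)
    (hv : ValidMatrix k n v) (hv' : ValidMatrix k n v')
    (hf : IsFA v f) (hf' : IsFA v' f) : MatrixEquiv k n v v' := by
  obtain ⟨-, hcols, hrows, -⟩ := hv
  obtain ⟨-, hcols', hrows', -⟩ := hv'
  choose c hc using hcols
  choose c' hc' using hcols'
  have veq : ∀ a b : ℤ, v a = v b ↔ c a = c b := by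
    intro a b
    constructor
    · intro hab
      exact single_idx (m := k) (by rw [← hc a, ← hc b, hab])
    · intro hab; rw [hc a, hc b, hab]
  have veq' : ∀ a b : ℤ, v' a = v' b ↔ c' a = c' b := by
    intro a b
    constructor
    · intro hab
      exact single_idx (m := k) (by rw [← hc' a, ← hc' b, hab])
    · intro hab; rw [hc' a, hc' b, hab]
  have key : ∀ a b : ℤ, c a = c b ↔ c' a = c' b := by
    intro a b
    rw [← veq, ← veq', isFA_eq_iff hf, isFA_eq_iff hf']
  have csurj' : ∀ ℓ : Fin (k+1), ∃ j, c' j = ℓ := by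
    intro ℓ
    obtain ⟨j, hj⟩ := hrows' ℓ
    refine ⟨j, ?_⟩
    by_contra hne
    rw [hc' j, Pi.single_apply, if_neg (fun hcc => hne hcc.symm)] at hj
    exact hj rfl
  choose pick hpick using csurj'
  set σ0 : Fin (k+1) → Fin (k+1) := fun ℓ => c (pick ℓ) with hσ0
  have hkey2 : ∀ j : ℤ, σ0 (c' j) = c j := by
    intro j
    simp only [hσ0]
    exact (key (pick (c' j)) j).mpr (by rw [hpick])
  have hinj : Function.Injective σ0 := by
    intro l1 l2 hl
    simp only [hσ0] at hl
    have h2 : c' (pick l1) = c' (pick l2) := (key _ _).mp hl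
    rw [hpick, hpick] at h2
    exact h2
  set σ : Equiv.Perm (Fin (k+1)) := Equiv.ofBijective σ0 (Finite.injective_iff_bijective.mp hinj)
  refine ⟨σ, 0, ?_⟩
  intro j ℓ
  rw [show j + (0:ℤ) * n = j by ring]
  have hiff : σ0 ℓ = c j ↔ ℓ = c' j :=
    ⟨fun hh2 => hinj (hh2.trans (hkey2 j).symm), fun hh2 => by rw [hh2, hkey2]⟩
  rw [hc j, hc' j, Pi.single_apply, Pi.single_apply]
  exact if_congr hiff.symm rfl rfl

end FAP

/-- The assignment `A ↦ f_A` is a bijection from equivalence classes of valid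
matrices onto `S̃_n^{k,+}`: it is well defined, surjective, and injective up to
matrix equivalence. -/
theorem fA_bijection (k n : ℕ) (hk : 0 < k) (hkn : k < n) :
    (∀ v : ℤ → Fin (k + 1) → ℂ, ValidMatrix k n v →
      ∃ f : ℤ → ℤ, IsFA v f ∧ IsSkPlus k n f) ∧
    (∀ f : ℤ → ℤ, IsSkPlus k n f →
      ∃ v : ℤ → Fin (k + 1) → ℂ, ValidMatrix k n v ∧ IsFA v f) ∧
    (∀ (v v' : ℤ → Fin (k + 1) → ℂ) (f : ℤ → ℤ), ValidMatrix k n v → ValidMatrix k n v' →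
      IsFA v f → IsFA v' f → MatrixEquiv k n v v') := by
  refine ⟨?_, ?_, ?_⟩
  · intro v hv
    obtain ⟨f, hf⟩ := FAP.exists_isFA (hk.trans hkn) hv
    exact ⟨f, hf, FAP.isSkPlus_of_isFA hk hkn hv hf⟩
  · intro f hf
    exact FAP.part2 hk hkn f hf
  · intro v v' f hv hv' hf hf'
    exact FAP.part3 v v' f hv hv' hf hf'
end
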